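/- arXiv:2211.02871 — 6 statements merged into one kernel-verified Lean document; each statement's English description precedes it below -/
import Mathlib

section
/- Let N ≥ 2, let ρ be a positive semidefinite N-qubit operator, and let α be a real number with −1 ≤ α ≤ 2. Then for every i ∈ Fin N, the matrix σ = Tr(ρ)·𝟙 + α·ρ is biseparable across the 1:(N−1) bipartition at qubit i. -/
open scoped ComplexOrder

noncomputable section

/-- Separability of an `N`-qubit matrix across the bipartition `X : Xᶜ`. -/
def SepAcross {N : ℕ} (X : Finset (Fin N))
    (σ : Matrix (Fin N → Fin 2) (Fin N → Fin 2) ℂ) : Prop :=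
  ∃ (K : ℕ)
    (A : Fin K → Matrix ({i // i ∈ X} → Fin 2) ({i // i ∈ X} → Fin 2) ℂ)
    (B : Fin K → Matrix ({i // i ∈ Xᶜ} → Fin 2) ({i // i ∈ Xᶜ} → Fin 2) ℂ),
    (∀ k, (A k).PosSemidef) ∧ (∀ k, (B k).PosSemidef) ∧
    ∀ x y, σ x y =
      ∑ k, A k (fun i => x i.1) (fun i => y i.1) * B k (fun i => x i.1) (fun i => y i.1)

/-- Partial transpose with respect to the qubits in `X`. -/
def pt {N : ℕ} (X : Finset (Fin N))
    (σ : Matrix (Fin N → Fin 2) (Fin N → Fin 2) ℂ) :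
    Matrix (Fin N → Fin 2) (Fin N → Fin 2) ℂ :=
  fun x y => σ (fun i => if i ∈ X then y i else x i) (fun i => if i ∈ X then x i else y i)

/-- The Dicke state `|S_k^N⟩`. -/
def dicke (N k : ℕ) : (Fin N → Fin 2) → ℂ :=
  fun x => if (Finset.univ.filter (fun i => x i = 1)).card = k
    then ((Real.sqrt (N.choose k))⁻¹ : ℝ) else 0

/-- The projector onto the symmetric subspace of `N` qubits. -/
def symProj (N : ℕ) : Matrix (Fin N → Fin 2) (Fin N → Fin 2) ℂ :=
  fun x y => ∑ k ∈ Finset.range (N + 1), dicke N k x * star (dicke N k y)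

/-- Full separability of an `N`-qubit matrix. -/
def FullySep {N : ℕ} (σ : Matrix (Fin N → Fin 2) (Fin N → Fin 2) ℂ) : Prop :=
  ∃ (K : ℕ) (A : Fin K → Fin N → Matrix (Fin 2) (Fin 2) ℂ),
    (∀ k i, (A k i).PosSemidef) ∧
    ∀ x y, σ x y = ∑ k, ∏ i, A k i (x i) (y i)

/-- The second Pauli matrix. -/
def pauliY : Matrix (Fin 2) (Fin 2) ℂ := !![0, -Complex.I; Complex.I, 0]

/-- The `N`-qubit operator acting as `σy` on each qubit in `X` and trivially elsewhere. -/
def pauliYat {N : ℕ} (X : Finset (Fin N)) :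
    Matrix (Fin N → Fin 2) (Fin N → Fin 2) ℂ :=
  fun x y => ∏ i, if i ∈ X then pauliY (x i) (y i) else (if x i = y i then 1 else 0)

/-- `(σy@X) · ρ^{T_X} · (σy@X)`. -/
def tildeAt {N : ℕ} (X : Finset (Fin N))
    (ρ : Matrix (Fin N → Fin 2) (Fin N → Fin 2) ℂ) :
    Matrix (Fin N → Fin 2) (Fin N → Fin 2) ℂ :=
  pauliYat X * pt X ρ * pauliYat X

/-- The Hankel matrix `M_l(q)` with entries `q_{i+j+l} / (N choose (i+j+l))`. -/
def hankel (N l : ℕ) (q : ℕ → ℝ) :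
    Matrix (Fin ((N - l) / 2 + 1)) (Fin ((N - l) / 2 + 1)) ℝ :=
  fun i j => q ((i : ℕ) + j + l) / (N.choose ((i : ℕ) + j + l))

/-- The diagonal symmetric state `Σ_k p_k |S_k^N⟩⟨S_k^N|`. -/
def rhoDS (N : ℕ) (p : ℕ → ℝ) : Matrix (Fin N → Fin 2) (Fin N → Fin 2) ℂ :=
  fun x y => ∑ k ∈ Finset.range (N + 1), (p k : ℂ) * dicke N k x * star (dicke N k y)

set_option linter.unusedSectionVars false
set_option linter.unusedVariables false
set_option maxHeartbeats 1000000

namespace RedSepAux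
open Complex Matrix Finset

variable {R : Type} [Fintype R] [DecidableEq R]

/-- inner product -/
def ip (a b : R → ℂ) : ℂ := ∑ r, (starRingEnd ℂ) (a r) * b r

/-- norm squared -/
def ns (a : R → ℂ) : ℝ := ∑ r, Complex.normSq (a r)

/-- outer product matrix -/
def outer (a : R → ℂ) : Matrix R R ℂ := Matrix.of fun z w => a z * (starRingEnd ℂ) (a w)

lemma outer_apply (a : R → ℂ) (z w : R) : outer a z w = a z * (starRingEnd ℂ) (a w) := rfl

lemma ns_nonneg (a : R → ℂ) : 0 ≤ ns a :=
  Finset.sum_nonneg fun r _ => Complex.normSq_nonneg _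

lemma eq_zero_of_ns_eq_zero {a : R → ℂ} (h : ns a = 0) : ∀ r, a r = 0 := by
  intro r
  have := (Finset.sum_eq_zero_iff_of_nonneg (fun r _ => Complex.normSq_nonneg (a r))).1 h r
    (Finset.mem_univ r)
  exact Complex.normSq_eq_zero.1 this

lemma ip_self (a : R → ℂ) : ip a a = ((ns a : ℝ) : ℂ) := by
  unfold ip ns
  push_cast
  refine Finset.sum_congr rfl fun r _ => ?_
  rw [mul_comm, Complex.mul_conj]

lemma ip_conj (a b : R → ℂ) : ip b a = (starRingEnd ℂ) (ip a b) := by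
  unfold ip
  rw [map_sum]
  refine Finset.sum_congr rfl fun r _ => ?_
  simp [mul_comm]

lemma outer_isHermitian (a : R → ℂ) : (outer a).IsHermitian := by
  ext z w
  simp [Matrix.conjTranspose_apply, outer_apply, mul_comm]

lemma outer_posSemidef (a : R → ℂ) : (outer a).PosSemidef := by
  refine Matrix.PosSemidef.of_dotProduct_mulVec_nonneg (outer_isHermitian a) fun x => ?_
  have hmv : ∀ z, (outer a *ᵥ x) z = a z * ip a x := by
    intro z
    simp only [Matrix.mulVec, dotProduct, outer_apply, ip, Finset.mul_sum]
    exact Finset.sum_congr rfl fun r _ => by ring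
  have : dotProduct (star x) (outer a *ᵥ x) = ip x a * ip a x := by
    simp only [dotProduct, Pi.star_apply, hmv, ip, Finset.sum_mul]
    refine Finset.sum_congr rfl fun r _ => ?_
    simp only [RCLike.star_def]
    ring
  rw [this, ip_conj]
  have := star_mul_self_nonneg (ip a x)
  simpa [RCLike.star_def] using this

lemma smul_posSemidef {M : Matrix R R ℂ} (hM : M.PosSemidef) {c : ℝ} (hc : 0 ≤ c) :
    (((c : ℝ) : ℂ) • M).PosSemidef := by
  refine Matrix.PosSemidef.of_dotProduct_mulVec_nonneg ?_ fun x => ?_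
  · unfold Matrix.IsHermitian
    rw [Matrix.conjTranspose_smul, hM.1.eq]
    congr 1
    simp
  · rw [Matrix.smul_mulVec, dotProduct_smul]
    have h0 : (0:ℂ) ≤ (c:ℂ) := Complex.zero_le_real.2 hc
    exact smul_nonneg h0 (hM.dotProduct_mulVec_nonneg x)

lemma outer_mul_self (a : R → ℂ) : outer a * outer a = ((ns a : ℝ) : ℂ) • outer a := by
  ext z w
  simp only [Matrix.mul_apply, outer_apply, Matrix.smul_apply, smul_eq_mul]
  rw [← ip_self, ip]
  rw [Finset.sum_mul]
  refine Finset.sum_congr rfl fun r _ => by ring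

lemma outer_mul_outer {a b : R → ℂ} (h : ip a b = 0) : outer a * outer b = 0 := by
  ext z w
  simp only [Matrix.mul_apply, outer_apply, Matrix.zero_apply]
  have : ∑ r, a z * (starRingEnd ℂ) (a r) * (b r * (starRingEnd ℂ) (b w))
      = (a z * (starRingEnd ℂ) (b w)) * ip a b := by
    rw [ip, Finset.mul_sum]
    exact Finset.sum_congr rfl fun r _ => by ring
  rw [this, h, mul_zero]


lemma outer_zero : outer (0 : R → ℂ) = 0 := by
  ext z w
  simp [outer_apply]

lemma smul_isHermitian {M : Matrix R R ℂ} (hM : M.IsHermitian) (c : ℝ) :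
    (((c : ℝ) : ℂ) • M).IsHermitian := by
  unfold Matrix.IsHermitian
  rw [Matrix.conjTranspose_smul, hM.eq]
  congr 1
  simp

/-- key projector-based positivity lemma, one-vector version -/
lemma onepsd (a : R → ℂ) (ν β : ℝ) (hν : 0 ≤ ν) (h : 0 ≤ ν + β * ns a) :
    (((ν : ℝ) : ℂ) • (1 : Matrix R R ℂ) + ((β : ℝ) : ℂ) • outer a).PosSemidef := by
  by_cases hn : ns a = 0
  · have ha : a = 0 := funext (eq_zero_of_ns_eq_zero hn)
    rw [ha, outer_zero, smul_zero, add_zero]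
    exact smul_posSemidef Matrix.PosSemidef.one hν
  · have hn0 : 0 < ns a := lt_of_le_of_ne (ns_nonneg a) (Ne.symm hn)
    set n : ℝ := ns a with hndef
    -- projector J = n⁻¹ • outer a
    set J : Matrix R R ℂ := (((n⁻¹ : ℝ) : ℂ)) • outer a with hJ
    have hJJ : J * J = J := by
      rw [hJ, Matrix.smul_mul, Matrix.mul_smul, outer_mul_self, smul_smul, smul_smul]
      congr 1
      push_cast
      field_simp
      rfl
    have hJH : J.IsHermitian := smul_isHermitian (outer_isHermitian a) _
    have hPH : ((1 : Matrix R R ℂ) - J).IsHermitian := by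
      unfold Matrix.IsHermitian
      rw [Matrix.conjTranspose_sub, Matrix.conjTranspose_one, hJH.eq]
    have hPP : ((1 : Matrix R R ℂ) - J) * ((1 : Matrix R R ℂ) - J) = (1 : Matrix R R ℂ) - J := by
      rw [Matrix.sub_mul, Matrix.mul_sub, Matrix.mul_sub, hJJ]
      simp only [one_mul, mul_one]
      abel
    have hPpsd : ((1 : Matrix R R ℂ) - J).PosSemidef := by
      have := Matrix.posSemidef_conjTranspose_mul_self ((1 : Matrix R R ℂ) - J)
      rwa [hPH.eq, hPP] at this
    -- M = ν • P + (ν/n + β) • outer a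
    have hdecomp : (((ν : ℝ) : ℂ) • (1 : Matrix R R ℂ) + ((β : ℝ) : ℂ) • outer a)
        = ((ν : ℝ) : ℂ) • ((1 : Matrix R R ℂ) - J) + (((ν * n⁻¹ + β : ℝ) : ℂ)) • outer a := by
      rw [hJ, smul_sub, smul_smul]
      push_cast
      module
    rw [hdecomp]
    refine Matrix.PosSemidef.add (smul_posSemidef hPpsd hν) (smul_posSemidef (outer_posSemidef a) ?_)
    have : ν * n⁻¹ + β = (ν + β * n) / n := by field_simp
    rw [this]
    exact div_nonneg h hn0.le

/-- two orthogonal vectors version -/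
lemma orthpsd (a b : R → ℂ) (hab : ip a b = 0) (ν β γ : ℝ) (hν : 0 ≤ ν)
    (hb2 : 0 ≤ ν + β * ns a) (hb3 : 0 ≤ ν + γ * ns b) :
    (((ν : ℝ) : ℂ) • (1 : Matrix R R ℂ) + ((β : ℝ) : ℂ) • outer a
      + ((γ : ℝ) : ℂ) • outer b).PosSemidef := by
  by_cases hna : ns a = 0
  · have ha : a = 0 := funext (eq_zero_of_ns_eq_zero hna)
    rw [ha, outer_zero, smul_zero, add_zero]
    exact onepsd b ν γ hν hb3
  by_cases hnb : ns b = 0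
  · have hb : b = 0 := funext (eq_zero_of_ns_eq_zero hnb)
    rw [hb, outer_zero, smul_zero, add_zero]
    exact onepsd a ν β hν hb2
  · have hna0 : 0 < ns a := lt_of_le_of_ne (ns_nonneg a) (Ne.symm hna)
    have hnb0 : 0 < ns b := lt_of_le_of_ne (ns_nonneg b) (Ne.symm hnb)
    have hba : ip b a = 0 := by rw [ip_conj, hab, map_zero]
    set J : Matrix R R ℂ := (((ns a)⁻¹ : ℝ) : ℂ) • outer a + (((ns b)⁻¹ : ℝ) : ℂ) • outer b with hJ
    have hJJ : J * J = J := by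
      rw [hJ, Matrix.add_mul, Matrix.mul_add, Matrix.mul_add]
      simp only [Matrix.smul_mul, Matrix.mul_smul, outer_mul_self, outer_mul_outer hab,
        outer_mul_outer hba, smul_zero, smul_smul]
      rw [add_zero, zero_add]
      congr 2
      · push_cast; field_simp
      · push_cast; field_simp
    have hJH : J.IsHermitian := by
      apply Matrix.IsHermitian.add <;> exact smul_isHermitian (outer_isHermitian _) _
    have hPH : ((1 : Matrix R R ℂ) - J).IsHermitian := by
      unfold Matrix.IsHermitian
      rw [Matrix.conjTranspose_sub, Matrix.conjTranspose_one, hJH.eq]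
    have hPP : ((1 : Matrix R R ℂ) - J) * ((1 : Matrix R R ℂ) - J) = (1 : Matrix R R ℂ) - J := by
      rw [Matrix.sub_mul, Matrix.mul_sub, Matrix.mul_sub, hJJ]
      simp only [one_mul, mul_one]
      abel
    have hPpsd : ((1 : Matrix R R ℂ) - J).PosSemidef := by
      have := Matrix.posSemidef_conjTranspose_mul_self ((1 : Matrix R R ℂ) - J)
      rwa [hPH.eq, hPP] at this
    have hdecomp : (((ν : ℝ) : ℂ) • (1 : Matrix R R ℂ) + ((β : ℝ) : ℂ) • outer a
          + ((γ : ℝ) : ℂ) • outer b)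
        = ((ν : ℝ) : ℂ) • ((1 : Matrix R R ℂ) - J)
          + (((ν * (ns a)⁻¹ + β : ℝ) : ℂ)) • outer a
          + (((ν * (ns b)⁻¹ + γ : ℝ) : ℂ)) • outer b := by
      rw [hJ, smul_sub, smul_add, smul_smul, smul_smul]
      push_cast
      module
    rw [hdecomp]
    refine Matrix.PosSemidef.add (Matrix.PosSemidef.add (smul_posSemidef hPpsd hν)
      (smul_posSemidef (outer_posSemidef a) ?_)) (smul_posSemidef (outer_posSemidef b) ?_)
    · have : ν * (ns a)⁻¹ + β = (ν + β * ns a) / ns a := by field_simp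
      rw [this]; exact div_nonneg hb2 hna0.le
    · have : ν * (ns b)⁻¹ + γ = (ν + γ * ns b) / ns b := by field_simp
      rw [this]; exact div_nonneg hb3 hnb0.le


def ProdDec (τ : Fin 2 → Fin 2 → R → R → ℂ) : Prop :=
  ∃ (K : ℕ) (A : Fin K → Matrix (Fin 2) (Fin 2) ℂ) (B : Fin K → Matrix R R ℂ),
    (∀ k, (A k).PosSemidef) ∧ (∀ k, (B k).PosSemidef) ∧
    ∀ a b z w, τ a b z w = ∑ k, A k a b * B k z w

lemma prodDec_of (τ : Fin 2 → Fin 2 → R → R → ℂ) (ι : Type) [Fintype ι]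
    (A : ι → Matrix (Fin 2) (Fin 2) ℂ) (B : ι → Matrix R R ℂ)
    (hA : ∀ k, (A k).PosSemidef) (hB : ∀ k, (B k).PosSemidef)
    (hid : ∀ a b z w, τ a b z w = ∑ k, A k a b * B k z w) : ProdDec τ := by
  refine ⟨Fintype.card ι, A ∘ (Fintype.equivFin ι).symm, B ∘ (Fintype.equivFin ι).symm,
    fun k => hA _, fun k => hB _, fun a b z w => ?_⟩
  rw [hid a b z w]
  exact (Fintype.sum_equiv (Fintype.equivFin ι).symm _ _ (fun k => rfl)).symm

lemma I_four : Complex.I ^ 4 = 1 := by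
  rw [show (4:ℕ) = 2*2 from rfl, pow_mul, Complex.I_sq]; norm_num


lemma master (g : Fin 2 → R → ℂ) (horth : ip (g 0) (g 1) = 0)
    (α lam s t p q : ℝ) (hlam : 0 ≤ lam)
    (hoff : ∀ z w, ((lam*s*t*p*q : ℝ) : ℂ) * (g 0 z * (starRingEnd ℂ) (g 1 w))
        = ((α : ℝ) : ℂ) * (g 0 z * (starRingEnd ℂ) (g 1 w)))
    (hoff' : ∀ z w, ((lam*s*t*p*q : ℝ) : ℂ) * (g 1 z * (starRingEnd ℂ) (g 0 w))
        = ((α : ℝ) : ℂ) * (g 1 z * (starRingEnd ℂ) (g 0 w)))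
    (h2 : 0 ≤ (ns (g 0) + ns (g 1)) + (α - lam*s^2*p^2) * ns (g 0))
    (h3 : 0 ≤ (ns (g 0) + ns (g 1)) - lam*s^2*q^2 * ns (g 1))
    (h4 : 0 ≤ (ns (g 0) + ns (g 1)) - lam*t^2*p^2 * ns (g 0))
    (h5 : 0 ≤ (ns (g 0) + ns (g 1)) + (α - lam*t^2*q^2) * ns (g 1)) :
    ProdDec (fun a b z w => ((ns (g 0) + ns (g 1) : ℝ) : ℂ) * (if a = b then 1 else 0)
      * (if z = w then 1 else 0) + ((α : ℝ):ℂ) * (g a z * (starRingEnd ℂ) (g b w))) := by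
  have hnv0 : 0 ≤ ns (g 0) + ns (g 1) := add_nonneg (ns_nonneg _) (ns_nonneg _)
  set nv : ℝ := ns (g 0) + ns (g 1) with hnv
  set ph : Fin 4 → ℂ := ![1, Complex.I, -1, -Complex.I] with hph
  set u : Fin 4 → Fin 2 → ℂ := fun φ => ![(s : ℂ), ph φ * (t : ℝ)] with hu
  set wv : Fin 4 → R → ℂ :=
    fun φ z => (p : ℂ) * g 0 z + (starRingEnd ℂ) (ph φ) * (q : ℂ) * g 1 z with hwv
  set R0 : Matrix R R ℂ := ((nv : ℝ) : ℂ) • (1 : Matrix R R ℂ)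
      + ((α - lam*s^2*p^2 : ℝ) : ℂ) • outer (g 0)
      + ((-(lam*s^2*q^2) : ℝ) : ℂ) • outer (g 1) with hR0
  set R1 : Matrix R R ℂ := ((nv : ℝ) : ℂ) • (1 : Matrix R R ℂ)
      + ((-(lam*t^2*p^2) : ℝ) : ℂ) • outer (g 0)
      + ((α - lam*t^2*q^2 : ℝ) : ℂ) • outer (g 1) with hR1
  apply prodDec_of _ (Fin 4 ⊕ Fin 2)
    (Sum.elim (fun φ => ((lam/4 : ℝ) : ℂ) • outer (u φ))
      ![Matrix.diagonal ![1,0], Matrix.diagonal ![0,1]])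
    (Sum.elim (fun φ => outer (wv φ)) ![R0, R1])
  · rintro (φ | m)
    · exact smul_posSemidef (outer_posSemidef _) (by positivity)
    · fin_cases m <;>
      · simp only [Matrix.cons_val_zero, Matrix.cons_val_one, Matrix.head_cons, Sum.elim_inr]
        refine Matrix.PosSemidef.diagonal ?_
        intro j
        fin_cases j <;> norm_num
  · rintro (φ | m)
    · exact outer_posSemidef _
    · fin_cases m <;>
        simp only [Matrix.cons_val_zero, Matrix.cons_val_one, Matrix.head_cons, Sum.elim_inr]
      · exact orthpsd _ _ horth nv _ _ hnv0 (by linarith) (by linarith)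
      · exact orthpsd _ _ horth nv _ _ hnv0 (by linarith) (by linarith)
  · have hoffC : ∀ z w, (lam:ℂ)*s*t*p*q * (g 0 z * (starRingEnd ℂ) (g 1 w))
        = (α:ℂ) * (g 0 z * (starRingEnd ℂ) (g 1 w)) := by
      intro z w; have := hoff z w; push_cast at this; exact this
    have hoffC' : ∀ z w, (lam:ℂ)*s*t*p*q * (g 1 z * (starRingEnd ℂ) (g 0 w))
        = (α:ℂ) * (g 1 z * (starRingEnd ℂ) (g 0 w)) := by
      intro z w; have := hoff' z w; push_cast at this; exact this
    intro a b z w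
    rw [Fintype.sum_sum_type, Fin.sum_univ_four, Fin.sum_univ_two]
    fin_cases a <;> fin_cases b <;>
      simp only [Sum.elim_inl, Sum.elim_inr, hph, hu, hwv, hR0, hR1, outer_apply,
        Matrix.smul_apply, Matrix.add_apply, Matrix.one_apply, Matrix.diagonal_apply,
        Matrix.cons_val_zero, Matrix.cons_val_one, Matrix.head_cons, Matrix.cons_val',
        Matrix.cons_val_fin_one, Matrix.empty_val', smul_eq_mul,
        map_add, _root_.map_mul, Complex.conj_ofReal, Complex.conj_I, _root_.map_one, map_neg,
        Fin.isValue, if_true, if_false, Fin.mk_zero, Fin.mk_one,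
        Matrix.cons_val_two, Matrix.cons_val_three, Matrix.tail_cons] <;>
      push_cast <;> ring_nf <;> simp only [Complex.I_sq, I_four] <;> ring_nf
    · linear_combination -hoffC z w
    · linear_combination -hoffC' z w


lemma prodDec_add {τ₁ τ₂ : Fin 2 → Fin 2 → R → R → ℂ} (h₁ : ProdDec τ₁) (h₂ : ProdDec τ₂) :
    ProdDec (fun a b z w => τ₁ a b z w + τ₂ a b z w) := by
  obtain ⟨K₁, A₁, B₁, hA₁, hB₁, hid₁⟩ := h₁
  obtain ⟨K₂, A₂, B₂, hA₂, hB₂, hid₂⟩ := h₂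
  apply prodDec_of _ (Fin K₁ ⊕ Fin K₂) (Sum.elim A₁ A₂) (Sum.elim B₁ B₂)
  · rintro (k | k) <;> simp only [Sum.elim_inl, Sum.elim_inr] <;> [exact hA₁ k; exact hA₂ k]
  · rintro (k | k) <;> simp only [Sum.elim_inl, Sum.elim_inr] <;> [exact hB₁ k; exact hB₂ k]
  · intro a b z w
    rw [Fintype.sum_sum_type, hid₁, hid₂]
    simp

lemma prodDec_smul {τ : Fin 2 → Fin 2 → R → R → ℂ} (h : ProdDec τ) (c : ℝ) (hc : 0 ≤ c) :
    ProdDec (fun a b z w => ((c : ℝ) : ℂ) * τ a b z w) := by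
  obtain ⟨K, A, B, hA, hB, hid⟩ := h
  refine ⟨K, fun k => ((c : ℝ) : ℂ) • A k, B, fun k => ?_, hB, fun a b z w => ?_⟩
  · refine Matrix.PosSemidef.of_dotProduct_mulVec_nonneg ?_ fun x => ?_
    · unfold Matrix.IsHermitian
      rw [Matrix.conjTranspose_smul, (hA k).1.eq]
      congr 1
      simp
    · rw [Matrix.smul_mulVec, dotProduct_smul]
      exact smul_nonneg (Complex.zero_le_real.2 hc) ((hA k).dotProduct_mulVec_nonneg x)
  · show ((c : ℝ) : ℂ) * τ a b z w = _
    rw [hid, Finset.mul_sum]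
    refine Finset.sum_congr rfl fun k _ => ?_
    simp only [Matrix.smul_apply, smul_eq_mul]
    ring

lemma prodDec_conj {τ : Fin 2 → Fin 2 → R → R → ℂ} (h : ProdDec τ)
    (V : Matrix (Fin 2) (Fin 2) ℂ) :
    ProdDec (fun a b z w => ∑ m, ∑ m', (starRingEnd ℂ) (V a m) * V b m' * τ m m' z w) := by
  obtain ⟨K, A, B, hA, hB, hid⟩ := h
  set L : Matrix (Fin 2) (Fin 2) ℂ := V.map (starRingEnd ℂ) with hL
  have hLH : ∀ m' b, Lᴴ m' b = V b m' := by
    intro m' b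
    simp [hL, Matrix.conjTranspose_apply, Matrix.map_apply]
  refine ⟨K, fun k => L * A k * Lᴴ, B, fun k => (hA k).mul_mul_conjTranspose_same L, hB,
    fun a b z w => ?_⟩
  show ∑ m : Fin 2, ∑ m' : Fin 2, (starRingEnd ℂ) (V a m) * V b m' * τ m m' z w = _
  have expand : ∀ k, (L * A k * Lᴴ) a b
      = ∑ m : Fin 2, ∑ m' : Fin 2, (starRingEnd ℂ) (V a m) * V b m' * A k m m' := by
    intro k
    rw [Matrix.mul_apply]
    rw [Finset.sum_comm]
    refine Finset.sum_congr rfl fun m' _ => ?_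
    rw [Matrix.mul_apply, Finset.sum_mul]
    refine Finset.sum_congr rfl fun m _ => ?_
    rw [hLH]
    simp [hL, Matrix.map_apply]
    ring
  calc ∑ m : Fin 2, ∑ m' : Fin 2, (starRingEnd ℂ) (V a m) * V b m' * τ m m' z w
      = ∑ m : Fin 2, ∑ m' : Fin 2, ∑ k, (starRingEnd ℂ) (V a m) * V b m' * A k m m' * B k z w := by
        refine Finset.sum_congr rfl fun m _ => Finset.sum_congr rfl fun m' _ => ?_
        rw [hid, Finset.mul_sum]
        refine Finset.sum_congr rfl fun k _ => by ring
    _ = ∑ m : Fin 2, ∑ k, ∑ m' : Fin 2, (starRingEnd ℂ) (V a m) * V b m' * A k m m' * B k z w :=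
        Finset.sum_congr rfl fun m _ => Finset.sum_comm
    _ = ∑ k, ∑ m : Fin 2, ∑ m' : Fin 2, (starRingEnd ℂ) (V a m) * V b m' * A k m m' * B k z w :=
        Finset.sum_comm
    _ = ∑ k, (L * A k * Lᴴ) a b * B k z w := by
        refine Finset.sum_congr rfl fun k _ => ?_
        rw [expand, Finset.sum_mul]
        refine Finset.sum_congr rfl fun m _ => ?_
        rw [Finset.sum_mul]

lemma inst_two (g : Fin 2 → R → ℂ) (horth : ip (g 0) (g 1) = 0) :
    ProdDec (fun a b z w => ((ns (g 0) + ns (g 1) : ℝ) : ℂ) * (if a = b then 1 else 0)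
      * (if z = w then 1 else 0) + ((2 : ℝ):ℂ) * (g a z * (starRingEnd ℂ) (g b w))) := by
  have hn0 : 0 ≤ ns (g 0) := ns_nonneg _
  have hn1 : 0 ≤ ns (g 1) := ns_nonneg _
  set r0 := Real.sqrt (ns (g 0)) with hr0
  set r1 := Real.sqrt (ns (g 1)) with hr1
  have hr0n : 0 ≤ r0 := Real.sqrt_nonneg _
  have hr1n : 0 ≤ r1 := Real.sqrt_nonneg _
  have e0 : r0^2 = ns (g 0) := Real.sq_sqrt hn0
  have e1 : r1^2 = ns (g 1) := Real.sq_sqrt hn1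
  have es : (Real.sqrt r0)^2 = r0 := Real.sq_sqrt hr0n
  have et : (Real.sqrt r1)^2 = r1 := Real.sq_sqrt hr1n
  apply master g horth 2 (2/(r0*r1)) (Real.sqrt r0) (Real.sqrt r1) (Real.sqrt r1) (Real.sqrt r0)
  · positivity
  · intro z w
    by_cases hd : r0 * r1 = 0
    · rcases mul_eq_zero.1 hd with h | h
      · have : g 0 z = 0 := eq_zero_of_ns_eq_zero (by rw [← e0, h]; ring) z
        rw [this]; ring
      · have : g 1 w = 0 := eq_zero_of_ns_eq_zero (by rw [← e1, h]; ring) w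
        rw [this]; simp
    · have heq : 2/(r0*r1) * Real.sqrt r0 * Real.sqrt r1 * Real.sqrt r1 * Real.sqrt r0 = 2 := by
        rw [show 2/(r0*r1) * Real.sqrt r0 * Real.sqrt r1 * Real.sqrt r1 * Real.sqrt r0
          = 2*((Real.sqrt r0)^2*(Real.sqrt r1)^2)/(r0*r1) by ring, es, et,
          mul_div_assoc, div_self hd, mul_one]
      rw [heq]
  · intro z w
    by_cases hd : r0 * r1 = 0
    · rcases mul_eq_zero.1 hd with h | h
      · have : g 0 w = 0 := eq_zero_of_ns_eq_zero (by rw [← e0, h]; ring) w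
        rw [this]; simp
      · have : g 1 z = 0 := eq_zero_of_ns_eq_zero (by rw [← e1, h]; ring) z
        rw [this]; simp
    · have heq : 2/(r0*r1) * Real.sqrt r0 * Real.sqrt r1 * Real.sqrt r1 * Real.sqrt r0 = 2 := by
        rw [show 2/(r0*r1) * Real.sqrt r0 * Real.sqrt r1 * Real.sqrt r1 * Real.sqrt r0
          = 2*((Real.sqrt r0)^2*(Real.sqrt r1)^2)/(r0*r1) by ring, es, et,
          mul_div_assoc, div_self hd, mul_one]
      rw [heq]
  · rw [es, et]
    by_cases hd : r0 * r1 = 0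
    · have : 2/(r0*r1) = 0 := by rw [hd, div_zero]
      rw [this]
      nlinarith
    · have heq : 2/(r0*r1)*r0*r1 = 2 := by rw [mul_assoc, div_mul_cancel₀ _ hd]
      rw [heq]
      nlinarith
  · rw [es]
    by_cases hd : r0 * r1 = 0
    · have : 2/(r0*r1) = 0 := by rw [hd, div_zero]
      rw [this]
      nlinarith
    · have heq : 2/(r0*r1)*r0*r0*ns (g 1) = 2*r0*r1 := by
        rw [← e1]; field_simp
      calc (0:ℝ) ≤ (r0 - r1)^2 := sq_nonneg _
        _ = ns (g 0) + ns (g 1) - 2*r0*r1 := by rw [← e0, ← e1]; ring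
        _ = ns (g 0) + ns (g 1) - 2/(r0*r1)*r0*r0*ns (g 1) := by rw [heq]
  · rw [et]
    by_cases hd : r0 * r1 = 0
    · have : 2/(r0*r1) = 0 := by rw [hd, div_zero]
      rw [this]
      nlinarith
    · have heq : 2/(r0*r1)*r1*r1*ns (g 0) = 2*r0*r1 := by
        rw [← e0]; field_simp
      calc (0:ℝ) ≤ (r0 - r1)^2 := sq_nonneg _
        _ = ns (g 0) + ns (g 1) - 2*r0*r1 := by rw [← e0, ← e1]; ring
        _ = ns (g 0) + ns (g 1) - 2/(r0*r1)*r1*r1*ns (g 0) := by rw [heq]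
  · rw [et, es]
    by_cases hd : r0 * r1 = 0
    · have : 2/(r0*r1) = 0 := by rw [hd, div_zero]
      rw [this]
      nlinarith
    · have heq : 2/(r0*r1)*r1*r0 = 2 := by rw [mul_assoc, mul_comm r1 r0, div_mul_cancel₀ _ hd]
      rw [heq]
      nlinarith

lemma inst_neg (g : Fin 2 → R → ℂ) (horth : ip (g 0) (g 1) = 0) :
    ProdDec (fun a b z w => ((ns (g 0) + ns (g 1) : ℝ) : ℂ) * (if a = b then 1 else 0)
      * (if z = w then 1 else 0) + ((-1 : ℝ):ℂ) * (g a z * (starRingEnd ℂ) (g b w))) := by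
  have hn0 : 0 ≤ ns (g 0) := ns_nonneg _
  have hn1 : 0 ≤ ns (g 1) := ns_nonneg _
  set r0 := Real.sqrt (ns (g 0)) with hr0
  set r1 := Real.sqrt (ns (g 1)) with hr1
  have hr0n : 0 ≤ r0 := Real.sqrt_nonneg _
  have hr1n : 0 ≤ r1 := Real.sqrt_nonneg _
  have e0 : r0^2 = ns (g 0) := Real.sq_sqrt hn0
  have e1 : r1^2 = ns (g 1) := Real.sq_sqrt hn1
  have es : (Real.sqrt r1)^2 = r1 := Real.sq_sqrt hr1n
  have et : (Real.sqrt r0)^2 = r0 := Real.sq_sqrt hr0n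
  have ep : (Real.sqrt (r1 * ns (g 1)))^2 = r1 * ns (g 1) :=
    Real.sq_sqrt (mul_nonneg hr1n hn1)
  have eq' : (-(Real.sqrt (r0 * ns (g 0))))^2 = r0 * ns (g 0) := by
    rw [neg_sq]; exact Real.sq_sqrt (mul_nonneg hr0n hn0)
  have hprod : ∀ z w : R, ns (g 0) * ns (g 1) = 0 →
      g 0 z * (starRingEnd ℂ) (g 1 w) = 0 := by
    intro z w h
    rcases mul_eq_zero.1 h with h | h
    · rw [eq_zero_of_ns_eq_zero h z]; ring
    · rw [eq_zero_of_ns_eq_zero h w]; simp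
  have hprod' : ∀ z w : R, ns (g 0) * ns (g 1) = 0 →
      g 1 z * (starRingEnd ℂ) (g 0 w) = 0 := by
    intro z w h
    rcases mul_eq_zero.1 h with h | h
    · rw [eq_zero_of_ns_eq_zero h w]; simp
    · rw [eq_zero_of_ns_eq_zero h z]; ring
  have hp : Real.sqrt (r1 * ns (g 1)) = Real.sqrt r1 * r1 := by
    rw [Real.sqrt_mul hr1n, ← hr1]
  have hq : Real.sqrt (r0 * ns (g 0)) = Real.sqrt r0 * r0 := by
    rw [Real.sqrt_mul hr0n, ← hr0]
  apply master g horth (-1) (1/(ns (g 0) * ns (g 1))) (Real.sqrt r1) (Real.sqrt r0)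
    (Real.sqrt (r1 * ns (g 1))) (-(Real.sqrt (r0 * ns (g 0))))
  · positivity
  · intro z w
    by_cases hnn : ns (g 0) * ns (g 1) = 0
    · rw [hprod z w hnn]
      simp
    · have hne' : r0^2*r1^2 ≠ 0 := by rw [e0, e1]; exact hnn
      have heq : 1/(ns (g 0) * ns (g 1)) * Real.sqrt r1 * Real.sqrt r0
          * Real.sqrt (r1 * ns (g 1)) * (-(Real.sqrt (r0 * ns (g 0)))) = -1 := by
        rw [hp, hq, show 1/(ns (g 0) * ns (g 1)) * Real.sqrt r1 * Real.sqrt r0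
            * (Real.sqrt r1 * r1) * (-(Real.sqrt r0 * r0))
          = -(((Real.sqrt r1)^2 * (Real.sqrt r0)^2 * (r0 * r1)) / (ns (g 0) * ns (g 1))) by ring,
          es, et, ← e0, ← e1, show r1 * r0 * (r0 * r1) = r0^2*r1^2 by ring, div_self hne']
      rw [heq]
  · intro z w
    by_cases hnn : ns (g 0) * ns (g 1) = 0
    · rw [hprod' z w hnn]
      simp
    · have hne' : r0^2*r1^2 ≠ 0 := by rw [e0, e1]; exact hnn
      have heq : 1/(ns (g 0) * ns (g 1)) * Real.sqrt r1 * Real.sqrt r0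
          * Real.sqrt (r1 * ns (g 1)) * (-(Real.sqrt (r0 * ns (g 0)))) = -1 := by
        rw [hp, hq, show 1/(ns (g 0) * ns (g 1)) * Real.sqrt r1 * Real.sqrt r0
            * (Real.sqrt r1 * r1) * (-(Real.sqrt r0 * r0))
          = -(((Real.sqrt r1)^2 * (Real.sqrt r0)^2 * (r0 * r1)) / (ns (g 0) * ns (g 1))) by ring,
          es, et, ← e0, ← e1, show r1 * r0 * (r0 * r1) = r0^2*r1^2 by ring, div_self hne']
      rw [heq]
  · rw [es, ep]
    by_cases hnn : ns (g 0) * ns (g 1) = 0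
    · have hz : (1:ℝ)/(ns (g 0) * ns (g 1)) = 0 := by rw [hnn, div_zero]
      rw [hz]
      nlinarith
    · have hne0 : ns (g 0) ≠ 0 := fun h => hnn (by rw [h, zero_mul])
      have hne1 : ns (g 1) ≠ 0 := fun h => hnn (by rw [h, mul_zero])
      have heq2 : 1/(ns (g 0) * ns (g 1)) * r1 * (r1 * ns (g 1)) = ns (g 1) / ns (g 0) := by
        rw [show 1/(ns (g 0) * ns (g 1)) * r1 * (r1 * ns (g 1))
          = r1^2 * ns (g 1)/(ns (g 0) * ns (g 1)) by ring, e1, mul_div_mul_right _ _ hne1]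
      rw [heq2]
      have h' : (-1 - ns (g 1)/ns (g 0)) * ns (g 0) = -(ns (g 0)) - ns (g 1) := by
        field_simp
      rw [h']
      linarith
  · rw [es, eq']
    by_cases hnn : ns (g 0) * ns (g 1) = 0
    · have hz : (1:ℝ)/(ns (g 0) * ns (g 1)) = 0 := by rw [hnn, div_zero]
      rw [hz]
      nlinarith
    · have hne0 : ns (g 0) ≠ 0 := fun h => hnn (by rw [h, zero_mul])
      have hne1 : ns (g 1) ≠ 0 := fun h => hnn (by rw [h, mul_zero])
      have heq2 : 1/(ns (g 0) * ns (g 1)) * r1 * (r0 * ns (g 0)) * ns (g 1) = r0 * r1 := by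
        field_simp
      rw [show (1:ℝ)/(ns (g 0) * ns (g 1)) * r1 * (r0 * ns (g 0)) * ns (g 1) = r0 * r1 from heq2]
      nlinarith [sq_nonneg (r0 - r1)]
  · rw [et, ep]
    by_cases hnn : ns (g 0) * ns (g 1) = 0
    · have hz : (1:ℝ)/(ns (g 0) * ns (g 1)) = 0 := by rw [hnn, div_zero]
      rw [hz]
      nlinarith
    · have hne0 : ns (g 0) ≠ 0 := fun h => hnn (by rw [h, zero_mul])
      have hne1 : ns (g 1) ≠ 0 := fun h => hnn (by rw [h, mul_zero])
      have heq2 : 1/(ns (g 0) * ns (g 1)) * r0 * (r1 * ns (g 1)) * ns (g 0) = r0 * r1 := by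
        field_simp
      rw [heq2]
      nlinarith [sq_nonneg (r0 - r1)]
  · rw [et, eq']
    by_cases hnn : ns (g 0) * ns (g 1) = 0
    · have hz : (1:ℝ)/(ns (g 0) * ns (g 1)) = 0 := by rw [hnn, div_zero]
      rw [hz]
      nlinarith
    · have hne0 : ns (g 0) ≠ 0 := fun h => hnn (by rw [h, zero_mul])
      have hne1 : ns (g 1) ≠ 0 := fun h => hnn (by rw [h, mul_zero])
      have heq2 : 1/(ns (g 0) * ns (g 1)) * r0 * (r0 * ns (g 0)) = ns (g 0) / ns (g 1) := by
        rw [show 1/(ns (g 0) * ns (g 1)) * r0 * (r0 * ns (g 0))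
          = r0^2 * ns (g 0)/(ns (g 1) * ns (g 0)) by ring, e0, mul_div_mul_right _ _ hne0]
      rw [heq2]
      have h' : (-1 - ns (g 0)/ns (g 1)) * ns (g 1) = -(ns (g 1)) - ns (g 0) := by
        field_simp
      rw [h']
      linarith


lemma prodDec_congr {τ τ' : Fin 2 → Fin 2 → R → R → ℂ} (h : ProdDec τ)
    (he : ∀ a b z w, τ a b z w = τ' a b z w) : ProdDec τ' := by
  obtain ⟨K, A, B, hA, hB, hid⟩ := h
  exact ⟨K, A, B, hA, hB, fun a b z w => (he a b z w) ▸ hid a b z w⟩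

lemma prodDec_tau (g : Fin 2 → R → ℂ) (α : ℝ) (hα1 : -1 ≤ α) (hα2 : α ≤ 2) :
    ProdDec (fun a b z w => ((ns (g 0) + ns (g 1) : ℝ) : ℂ) * (if a = b then 1 else 0)
      * (if z = w then 1 else 0) + ((α : ℝ):ℂ) * (g a z * (starRingEnd ℂ) (g b w))) := by
  -- Gram matrix
  set W : Matrix (Fin 2) (Fin 2) ℂ := Matrix.of (fun m m' => ip (g m) (g m')) with hWdef
  have hW : W.IsHermitian := by
    ext m m'
    simp only [Matrix.conjTranspose_apply, hWdef, Matrix.of_apply, RCLike.star_def]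
    exact (ip_conj _ _).symm
  set V : Matrix (Fin 2) (Fin 2) ℂ := (hW.eigenvectorUnitary : Matrix (Fin 2) (Fin 2) ℂ)
    with hVdef
  have hV2 : V * star V = 1 := Matrix.mem_unitaryGroup_iff.mp (hW.eigenvectorUnitary).2
  have hdiag : star V * W * V = Matrix.diagonal (RCLike.ofReal ∘ hW.eigenvalues) :=
    by simpa using hW.conjStarAlgAut_star_eigenvectorUnitary
  -- rotated rows
  set g' : Fin 2 → R → ℂ := fun m z => ∑ p, V p m * g p z with hg'def
  have expand_ip : ∀ m m', ip (g' m) (g' m')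
      = (starRingEnd ℂ) (V 0 m) * V 0 m' * ip (g 0) (g 0)
      + (starRingEnd ℂ) (V 0 m) * V 1 m' * ip (g 0) (g 1)
      + (starRingEnd ℂ) (V 1 m) * V 0 m' * ip (g 1) (g 0)
      + (starRingEnd ℂ) (V 1 m) * V 1 m' * ip (g 1) (g 1) := by
    intro m m'
    unfold ip
    calc (∑ z, (starRingEnd ℂ) (g' m z) * g' m' z)
        = ∑ z, ((starRingEnd ℂ) (V 0 m) * V 0 m' * ((starRingEnd ℂ) (g 0 z) * g 0 z)
            + (starRingEnd ℂ) (V 0 m) * V 1 m' * ((starRingEnd ℂ) (g 0 z) * g 1 z)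
            + (starRingEnd ℂ) (V 1 m) * V 0 m' * ((starRingEnd ℂ) (g 1 z) * g 0 z)
            + (starRingEnd ℂ) (V 1 m) * V 1 m' * ((starRingEnd ℂ) (g 1 z) * g 1 z)) := by
          refine Finset.sum_congr rfl fun z _ => ?_
          simp only [hg'def, Fin.sum_univ_two, map_add, _root_.map_mul]
          ring
      _ = _ := by
          simp only [Finset.sum_add_distrib, ← Finset.mul_sum]
  have entry : ∀ m m', (star V * W * V) m m'
      = (starRingEnd ℂ) (V 0 m) * V 0 m' * ip (g 0) (g 0)
      + (starRingEnd ℂ) (V 0 m) * V 1 m' * ip (g 0) (g 1)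
      + (starRingEnd ℂ) (V 1 m) * V 0 m' * ip (g 1) (g 0)
      + (starRingEnd ℂ) (V 1 m) * V 1 m' * ip (g 1) (g 1) := by
    intro m m'
    simp only [Matrix.mul_apply, Matrix.star_apply, RCLike.star_def, Fin.sum_univ_two,
      hWdef, Matrix.of_apply]
    ring
  have ipg' : ∀ m m', ip (g' m) (g' m') = (star V * W * V) m m' := by
    intro m m'
    rw [expand_ip, entry]
  have horth' : ip (g' 0) (g' 1) = 0 := by
    rw [ipg', hdiag]
    exact Matrix.diagonal_apply_ne _ (by norm_num)
  have hnorm : ((ns (g' 0) + ns (g' 1) : ℝ) : ℂ) = ((ns (g 0) + ns (g 1) : ℝ) : ℂ) := by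
    push_cast
    rw [← ip_self, ← ip_self, ← ip_self, ← ip_self, ipg', ipg']
    have htr : (star V * W * V) 0 0 + (star V * W * V) 1 1 = W 0 0 + W 1 1 := by
      have h1 : Matrix.trace (star V * W * V) = Matrix.trace W := by
        rw [Matrix.trace_mul_cycle, hV2, Matrix.one_mul]
      rw [Matrix.trace_fin_two, Matrix.trace_fin_two] at h1
      exact h1
    rw [htr]
    simp [hWdef]
  -- convex combination for the rotated rows
  have hcomb : ProdDec (fun a b z w => ((ns (g' 0) + ns (g' 1) : ℝ) : ℂ)
      * (if a = b then 1 else 0) * (if z = w then 1 else 0)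
      + ((α : ℝ):ℂ) * (g' a z * (starRingEnd ℂ) (g' b w))) := by
    have hneg := prodDec_smul (inst_neg g' horth') ((2 - α)/3) (by linarith)
    have htwo := prodDec_smul (inst_two g' horth') ((α + 1)/3) (by linarith)
    refine prodDec_congr (prodDec_add hneg htwo) fun a b z w => ?_
    push_cast
    ring
  -- conjugate back
  refine prodDec_congr (prodDec_conj hcomb V) fun a b z w => ?_
  have hdelta : ∀ a b : Fin 2, (starRingEnd ℂ) (V a 0) * V b 0
      + (starRingEnd ℂ) (V a 1) * V b 1 = if a = b then 1 else 0 := by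
    intro a b
    have h := congrFun (congrFun (congrArg (fun M => (M : Matrix (Fin 2) (Fin 2) ℂ)) hV2) b) a
    simp only [Matrix.mul_apply, Matrix.star_apply, RCLike.star_def, Fin.sum_univ_two,
      Matrix.one_apply] at h
    rw [show ((starRingEnd ℂ) (V a 0) * V b 0 + (starRingEnd ℂ) (V a 1) * V b 1)
      = (V b 0 * (starRingEnd ℂ) (V a 0) + V b 1 * (starRingEnd ℂ) (V a 1)) by ring, h]
    by_cases hab : a = b
    · simp [hab]
    · rw [if_neg (fun hh => hab hh.symm), if_neg hab]
  have recon : ∀ a z, (starRingEnd ℂ) (V a 0) * g' 0 z + (starRingEnd ℂ) (V a 1) * g' 1 z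
      = g a z := by
    intro a z
    simp only [hg'def, Fin.sum_univ_two]
    have h0 := hdelta a 0
    have h1 := hdelta a 1
    fin_cases a <;> simp at h0 h1 ⊢ <;> linear_combination (g 0 z) * h0 + (g 1 z) * h1
  have creron : ∀ b w, V b 0 * (starRingEnd ℂ) (g' 0 w) + V b 1 * (starRingEnd ℂ) (g' 1 w)
      = (starRingEnd ℂ) (g b w) := by
    intro b w
    have := recon b w
    have h := congrArg (starRingEnd ℂ) this
    simpa only [map_add, _root_.map_mul, RingHomCompTriple.comp_apply, RingHom.id_apply, Complex.conj_conj] using h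
  calc ∑ m : Fin 2, ∑ m' : Fin 2, (starRingEnd ℂ) (V a m) * V b m'
        * (((ns (g' 0) + ns (g' 1) : ℝ) : ℂ) * (if m = m' then 1 else 0) * (if z = w then 1 else 0)
          + ((α : ℝ):ℂ) * (g' m z * (starRingEnd ℂ) (g' m' w)))
      = ((ns (g' 0) + ns (g' 1) : ℝ) : ℂ)
          * ((starRingEnd ℂ) (V a 0) * V b 0 + (starRingEnd ℂ) (V a 1) * V b 1)
          * (if z = w then 1 else 0)
        + ((α : ℝ):ℂ) * (((starRingEnd ℂ) (V a 0) * g' 0 z + (starRingEnd ℂ) (V a 1) * g' 1 z)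
          * (V b 0 * (starRingEnd ℂ) (g' 0 w) + V b 1 * (starRingEnd ℂ) (g' 1 w))) := by
        simp only [Fin.sum_univ_two]
        norm_num
        split_ifs <;> ring
    _ = ((ns (g 0) + ns (g 1) : ℝ) : ℂ) * (if a = b then 1 else 0) * (if z = w then 1 else 0)
        + ((α : ℝ):ℂ) * (g a z * (starRingEnd ℂ) (g b w)) := by
        rw [hdelta, recon, creron, hnorm]


section Glue

variable {N : ℕ} (i : Fin N)

/-- SepAcross from an arbitrary finite family -/
lemma sep_of {X : Finset (Fin N)} (σ : Matrix (Fin N → Fin 2) (Fin N → Fin 2) ℂ)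
    (ι : Type) [Fintype ι]
    (A : ι → Matrix ({j // j ∈ X} → Fin 2) ({j // j ∈ X} → Fin 2) ℂ)
    (B : ι → Matrix ({j // j ∈ Xᶜ} → Fin 2) ({j // j ∈ Xᶜ} → Fin 2) ℂ)
    (hA : ∀ k, (A k).PosSemidef) (hB : ∀ k, (B k).PosSemidef)
    (hid : ∀ x y, σ x y = ∑ k, A k (fun j => x j.1) (fun j => y j.1)
      * B k (fun j => x j.1) (fun j => y j.1)) : SepAcross X σ := by
  refine ⟨Fintype.card ι, A ∘ (Fintype.equivFin ι).symm, B ∘ (Fintype.equivFin ι).symm,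
    fun k => hA _, fun k => hB _, fun x y => ?_⟩
  rw [hid x y]
  exact (Fintype.sum_equiv (Fintype.equivFin ι).symm _ _ (fun k => rfl)).symm

lemma sep_zero (X : Finset (Fin N)) : SepAcross X (0 : Matrix (Fin N → Fin 2) (Fin N → Fin 2) ℂ) :=
  ⟨0, ![], ![], fun k => Fin.elim0 k, fun k => Fin.elim0 k, fun x y => by simp⟩

lemma sep_add {X : Finset (Fin N)} {σ τ : Matrix (Fin N → Fin 2) (Fin N → Fin 2) ℂ}
    (hσ : SepAcross X σ) (hτ : SepAcross X τ) : SepAcross X (σ + τ) := by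
  obtain ⟨K₁, A₁, B₁, hA₁, hB₁, hid₁⟩ := hσ
  obtain ⟨K₂, A₂, B₂, hA₂, hB₂, hid₂⟩ := hτ
  apply sep_of _ (Fin K₁ ⊕ Fin K₂) (Sum.elim A₁ A₂) (Sum.elim B₁ B₂)
  · rintro (k | k) <;> simp only [Sum.elim_inl, Sum.elim_inr] <;> [exact hA₁ k; exact hA₂ k]
  · rintro (k | k) <;> simp only [Sum.elim_inl, Sum.elim_inr] <;> [exact hB₁ k; exact hB₂ k]
  · intro x y
    rw [Fintype.sum_sum_type]
    simp only [Sum.elim_inl, Sum.elim_inr, Matrix.add_apply]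
    rw [hid₁, hid₂]

lemma sep_sum {X : Finset (Fin N)} {J : Type*} (s : Finset J)
    (f : J → Matrix (Fin N → Fin 2) (Fin N → Fin 2) ℂ)
    (h : ∀ j ∈ s, SepAcross X (f j)) : SepAcross X (∑ j ∈ s, f j) :=
  Finset.sum_induction f (SepAcross X) (fun _ _ ha hb => sep_add ha hb) (sep_zero X) h

def ins (z : {j // j ∈ ({i} : Finset (Fin N))ᶜ} → Fin 2) (m : Fin 2) : Fin N → Fin 2 :=
  fun j => if h : j ∈ ({i} : Finset (Fin N))ᶜ then z ⟨j, h⟩ else m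

lemma ins_apply_i (z : {j // j ∈ ({i} : Finset (Fin N))ᶜ} → Fin 2) (m : Fin 2) :
    ins i z m i = m := by
  unfold ins
  rw [dif_neg]
  simp

lemma restr_ins (z : {j // j ∈ ({i} : Finset (Fin N))ᶜ} → Fin 2) (m : Fin 2) :
    (fun j : {j // j ∈ ({i} : Finset (Fin N))ᶜ} => ins i z m j.1) = z := by
  funext j
  unfold ins
  rw [dif_pos j.2]

lemma ins_restr (x : Fin N → Fin 2) :
    ins i (fun j : {j // j ∈ ({i} : Finset (Fin N))ᶜ} => x j.1) (x i) = x := by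
  funext j
  unfold ins
  by_cases h : j ∈ ({i} : Finset (Fin N))ᶜ
  · rw [dif_pos h]
  · rw [dif_neg h]
    have : j = i := by
      simpa [Finset.mem_compl, Finset.mem_singleton] using h
    rw [this]

/-- the equivalence (Fin 2) × rest ≃ all -/
def E : (Fin 2 × ({j // j ∈ ({i} : Finset (Fin N))ᶜ} → Fin 2)) ≃ (Fin N → Fin 2) where
  toFun p := ins i p.2 p.1
  invFun x := (x i, fun j => x j.1)
  left_inv p := by
    refine Prod.ext ?_ ?_
    · exact ins_apply_i i p.2 p.1
    · exact restr_ins i p.2 p.1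
  right_inv x := ins_restr i x

lemma delta_split (x y : Fin N → Fin 2) :
    (if x = y then (1:ℂ) else 0) = (if x i = y i then 1 else 0)
      * (if (fun j : {j // j ∈ ({i} : Finset (Fin N))ᶜ} => x j.1)
          = (fun j : {j // j ∈ ({i} : Finset (Fin N))ᶜ} => y j.1) then 1 else 0) := by
  by_cases h : x = y
  · rw [if_pos h, if_pos (by rw [h]), if_pos (by rw [h]), mul_one]
  · rw [if_neg h]
    by_cases h1 : x i = y i
    · by_cases h2 : (fun j : {j // j ∈ ({i} : Finset (Fin N))ᶜ} => x j.1)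
          = (fun j : {j // j ∈ ({i} : Finset (Fin N))ᶜ} => y j.1)
      · exfalso
        apply h
        have hx := ins_restr i x
        rw [h1, h2, ins_restr i y] at hx
        exact hx.symm
      · rw [if_neg h2, mul_zero]
    · rw [if_neg h1, zero_mul]

lemma sep_elem (v : (Fin N → Fin 2) → ℂ) (α : ℝ) (hα1 : -1 ≤ α) (hα2 : α ≤ 2) :
    SepAcross {i} (Matrix.of fun x y => ((ns v : ℝ):ℂ) * (if x = y then 1 else 0)
      + ((α:ℝ):ℂ) * (v x * (starRingEnd ℂ) (v y))) := by
  classical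
  set g : Fin 2 → ({j // j ∈ ({i} : Finset (Fin N))ᶜ} → Fin 2) → ℂ :=
    fun m z => v (ins i z m) with hg
  have hns : ns v = ns (g 0) + ns (g 1) := by
    unfold ns
    rw [← Equiv.sum_comp (E i) (fun x => Complex.normSq (v x)), Fintype.sum_prod_type,
      Fin.sum_univ_two]
    rfl
  obtain ⟨K, A, B, hA, hB, hid⟩ := prodDec_tau g α hα1 hα2
  have hmem : i ∈ ({i} : Finset (Fin N)) := Finset.mem_singleton_self i
  apply sep_of _ (Fin K)
    (fun k => (A k).submatrix (fun f => f ⟨i, hmem⟩) (fun f => f ⟨i, hmem⟩)) B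
    (fun k => (hA k).submatrix _) hB
  intro x y
  have h1 := hid (x i) (y i) (fun j => x j.1) (fun j => y j.1)
  simp only [Matrix.of_apply]
  rw [delta_split i x y, hns]
  have hgx : g (x i) (fun j => x j.1) = v x := by rw [hg]; simp only; rw [ins_restr]
  have hgy : g (y i) (fun j => y j.1) = v y := by rw [hg]; simp only; rw [ins_restr]
  rw [← hgx, ← hgy]
  dsimp only at h1
  rw [← mul_assoc]
  rw [h1]
  rfl

end Glue

open scoped MatrixOrder in
lemma exists_sqrt {n : Type} [Fintype n] [DecidableEq n] (ρ : Matrix n n ℂ) (hρ : ρ.PosSemidef) :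
    ∃ S : Matrix n n ℂ, S.IsHermitian ∧ S * S = ρ :=
  ⟨CFC.sqrt ρ, (CFC.sqrt_nonneg ρ).posSemidef.isHermitian, CFC.sqrt_mul_sqrt_self ρ hρ.nonneg⟩

end RedSepAux

/-- Reduction map sends every PSD `N`-qubit operator to a state biseparable across
every `1:(N-1)` bipartition, for `-1 ≤ α ≤ 2`. -/
theorem stmt0 (N : ℕ) (hN : 2 ≤ N)
    (ρ : Matrix (Fin N → Fin 2) (Fin N → Fin 2) ℂ) (hρ : ρ.PosSemidef)
    (α : ℝ) (hα1 : -1 ≤ α) (hα2 : α ≤ 2) (i : Fin N) :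
    SepAcross {i}
      (ρ.trace • (1 : Matrix (Fin N → Fin 2) (Fin N → Fin 2) ℂ) + (α : ℂ) • ρ) := by

  classical
  open RedSepAux in
  obtain ⟨S, hSH0, hSS0⟩ := exists_sqrt ρ hρ
  have hSH : S.IsHermitian := hSH0
  have hSS : S * S = ρ := hSS0
  have hApp : ∀ t y, S t y = (starRingEnd ℂ) (S y t) := by
    intro t y
    have := congrFun (congrFun hSH.eq t) y
    simpa [Matrix.conjTranspose_apply, RCLike.star_def] using this.symm
  have hEntry : ∀ x y, ρ x y = ∑ t, S x t * (starRingEnd ℂ) (S y t) := by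
    intro x y
    rw [← hSS, Matrix.mul_apply]
    exact Finset.sum_congr rfl fun t _ => by rw [hApp t y]
  have hTr : ρ.trace = ((∑ t, ns (fun x => S x t) : ℝ) : ℂ) := by
    have h0 : ρ.trace = ∑ x, ρ x x := rfl
    rw [h0]
    unfold ns
    push_cast
    rw [Finset.sum_comm]
    refine Finset.sum_congr rfl fun x _ => ?_
    rw [hEntry x x]
    refine Finset.sum_congr rfl fun t _ => ?_
    rw [Complex.mul_conj]
  have hsplit : ρ.trace • (1 : Matrix (Fin N → Fin 2) (Fin N → Fin 2) ℂ) + (α : ℂ) • ρ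
      = ∑ t : Fin N → Fin 2, Matrix.of (fun x y =>
          ((ns (fun x => S x t) : ℝ):ℂ) * (if x = y then 1 else 0)
          + ((α:ℝ):ℂ) * ((fun x => S x t) x * (starRingEnd ℂ) ((fun x => S x t) y))) := by
    ext x y
    simp only [Matrix.add_apply, Matrix.smul_apply, Matrix.one_apply, Matrix.sum_apply,
      Matrix.of_apply, smul_eq_mul]
    rw [Finset.sum_add_distrib, ← Finset.sum_mul, ← Finset.mul_sum, ← hEntry x y, hTr]
    push_cast
    ring
  rw [hsplit]
  apply RedSepAux.sep_sum
  intro t _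
  exact RedSepAux.sep_elem i (fun x => S x t) α hα1 hα2
end
end

section
/- Let N = 3 and let 𝟙_S be the projector onto the symmetric subspace of three qubits. The partial transpose (𝟙_S)^{T_{{0}}} with respect to qubit 0 is a positive semidefinite 8×8 matrix whose eigenvalues are 0 with multiplicity 2, 1/3 with multiplicity 4, and 4/3 with multiplicity 2; equivalently, its characteristic polynomial is x²·(x − 1/3)⁴·(x − 4/3)². -/
open scoped ComplexOrder

noncomputable section

-- auxiliary
def wt (x : Fin 3 → Fin 2) : ℕ := (Finset.univ.filter (fun i => x i = 1)).card

lemma wt_le (x : Fin 3 → Fin 2) : wt x ≤ 3 := by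
  have := Finset.card_filter_le (Finset.univ : Finset (Fin 3)) (fun i => x i = 1)
  simpa [wt] using this

/-- `3 ×` the symmetric-projector entries, as natural numbers. -/
def Pn : Matrix (Fin 3 → Fin 2) (Fin 3 → Fin 2) ℕ :=
  fun x y => if wt x = wt y then 3 / (Nat.choose 3 (wt x)) else 0

lemma symProj_eq (x y : Fin 3 → Fin 2) : symProj 3 x y = (Pn x y : ℂ) / 3 := by
  have hterm : ∀ k, dicke 3 k x * star (dicke 3 k y)
      = if wt x = k ∧ wt y = k then ((((Nat.choose 3 k : ℝ))⁻¹ : ℝ) : ℂ) else 0 := by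
    intro k
    show (if wt x = k then _ else 0) * star (if wt y = k then _ else 0) = _
    by_cases h1 : wt x = k <;> by_cases h2 : wt y = k
    · rw [if_pos h1, if_pos h2, if_pos ⟨h1, h2⟩, Complex.star_def, Complex.conj_ofReal,
        ← Complex.ofReal_mul, ← mul_inv, Real.mul_self_sqrt (by positivity)]
    · simp [h1, h2]
    · simp [h1, h2]
    · simp [h1, h2]
  show (∑ k ∈ Finset.range 4, dicke 3 k x * star (dicke 3 k y)) = _
  simp only [hterm]
  by_cases h : wt x = wt y
  · rw [h]
    simp only [and_self]
    rw [Finset.sum_ite_eq (Finset.range 4) (wt y)]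
    rw [if_pos (by simp [Nat.lt_succ]; exact wt_le y)]
    simp only [Pn, h, if_pos rfl]
    have hy := wt_le y
    interval_cases hw : wt y <;> norm_num
  · rw [Finset.sum_eq_zero, Pn, if_neg h]
    · norm_num
    · intro k _
      rw [if_neg]
      rintro ⟨h1, h2⟩
      exact h (h1.trans h2.symm)

def B1n : Matrix (Fin 3) (Fin 3) ℕ := !![3, 1, 1; 1, 1, 1; 1, 1, 1]
def BigN : Matrix (Fin 3 ⊕ (Fin 3 ⊕ Fin 2)) (Fin 3 ⊕ (Fin 3 ⊕ Fin 2)) ℕ :=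
  Matrix.fromBlocks B1n 0 0 (Matrix.fromBlocks B1n 0 0 1)

def eFun : (Fin 3 → Fin 2) → (Fin 3 ⊕ (Fin 3 ⊕ Fin 2)) := fun x =>
  if x = ![0,0,0] then .inl 0 else if x = ![1,0,1] then .inl 1 else
  if x = ![1,1,0] then .inl 2 else if x = ![1,1,1] then .inr (.inl 0) else
  if x = ![0,0,1] then .inr (.inl 1) else if x = ![0,1,0] then .inr (.inl 2) else
  if x = ![0,1,1] then .inr (.inr 0) else .inr (.inr 1)

def eInv : (Fin 3 ⊕ (Fin 3 ⊕ Fin 2)) → (Fin 3 → Fin 2) :=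
  Sum.elim (fun i => ![![0,0,0], ![1,0,1], ![1,1,0]] i)
    (Sum.elim (fun i => ![![1,1,1], ![0,0,1], ![0,1,0]] i)
      (fun i => ![![0,1,1], ![1,0,0]] i))

def eEquiv : (Fin 3 → Fin 2) ≃ (Fin 3 ⊕ (Fin 3 ⊕ Fin 2)) :=
  ⟨eFun, eInv, by decide, by decide⟩

def Qn : Matrix (Fin 3 → Fin 2) (Fin 3 → Fin 2) ℕ :=
  fun x y => Pn (fun i => if i ∈ ({0} : Finset (Fin 3)) then y i else x i)
    (fun i => if i ∈ ({0} : Finset (Fin 3)) then x i else y i)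

lemma key' : ∀ i j, Qn (eInv i) (eInv j) = BigN i j := by
  intro i j
  rcases i with i | i | i <;> rcases j with j | j | j <;> fin_cases i <;> fin_cases j <;> decide

lemma key : Qn = BigN.submatrix eFun eFun := by
  ext x y
  calc Qn x y = Qn (eInv (eFun x)) (eInv (eFun y)) := by
        rw [show eInv (eFun x) = x from eEquiv.left_inv x,
          show eInv (eFun y) = y from eEquiv.left_inv y]
  _ = BigN (eFun x) (eFun y) := key' _ _

def L3n : Matrix (Fin 3) (Fin 3) ℕ := !![3, 0, 0; 1, 1, 0; 1, 1, 1]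
def L8n : Matrix (Fin 3 ⊕ (Fin 3 ⊕ Fin 2)) (Fin 3 ⊕ (Fin 3 ⊕ Fin 2)) ℕ :=
  Matrix.fromBlocks L3n 0 0 (Matrix.fromBlocks L3n 0 0 1)
def d8n : (Fin 3 ⊕ (Fin 3 ⊕ Fin 2)) → ℕ :=
  Sum.elim ![1, 2, 0] (Sum.elim ![1, 2, 0] ![3, 3])

lemma decomp : 3 • BigN = L8n * Matrix.diagonal d8n * L8n.transpose := by decide

open Matrix Polynomial

def BigC : Matrix (Fin 3 ⊕ (Fin 3 ⊕ Fin 2)) (Fin 3 ⊕ (Fin 3 ⊕ Fin 2)) ℂ :=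
  (1/3 : ℂ) • BigN.map (Nat.cast)

def LC : Matrix (Fin 3 ⊕ (Fin 3 ⊕ Fin 2)) (Fin 3 ⊕ (Fin 3 ⊕ Fin 2)) ℂ :=
  L8n.map (Nat.cast)

def dC : (Fin 3 ⊕ (Fin 3 ⊕ Fin 2)) → ℂ := fun i => (d8n i : ℂ)

lemma hd : (Matrix.diagonal dC).PosSemidef :=
  Matrix.posSemidef_diagonal_iff.mpr (fun i => by unfold dC; positivity)

lemma hLDL : LC * Matrix.diagonal dC * LCᴴ = (3 • BigN).map (Nat.cast : ℕ → ℂ) := by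
  have h1 : LCᴴ = (L8n.transpose).map (Nat.cast : ℕ → ℂ) := by
    ext i j
    simp [LC, Matrix.conjTranspose_apply, Matrix.map_apply, Matrix.transpose_apply]
  have h2 : Matrix.diagonal dC = (Matrix.diagonal d8n).map (Nat.cast : ℕ → ℂ) := by
    rw [Matrix.diagonal_map (Nat.cast_zero)]; rfl
  rw [h1, h2, decomp, LC]
  simp only [show (Nat.cast : ℕ → ℂ) = ⇑(Nat.castRingHom ℂ) from rfl, Matrix.map_mul]

lemma hBigC : BigC = ((1/3 : ℂ) • LC) * Matrix.diagonal dC * ((1/3 : ℂ) • LC)ᴴ := by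
  have hstar : star (1/3 : ℂ) = 1/3 := by
    rw [star_div₀, star_one, show star (3:ℂ) = 3 from by norm_num [Complex.star_def, Complex.ext_iff]]
  have hsmul : ((3 • BigN).map (Nat.cast : ℕ → ℂ)) = (3 : ℂ) • (BigN.map (Nat.cast : ℕ → ℂ)) := by
    ext i j
    rw [Matrix.map_apply, Matrix.smul_apply, Matrix.smul_apply, Matrix.map_apply,
      nsmul_eq_mul]
    push_cast
    rw [smul_eq_mul]
  rw [Matrix.conjTranspose_smul, hstar, Matrix.smul_mul, Matrix.mul_smul, Matrix.smul_mul,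
    hLDL, hsmul, smul_smul, smul_smul, BigC]
  norm_num

lemma psdBigC : BigC.PosSemidef := by
  rw [hBigC]
  exact hd.mul_mul_conjTranspose_same _

def BC1 : Matrix (Fin 3) (Fin 3) ℂ := !![1, 1/3, 1/3; 1/3, 1/3, 1/3; 1/3, 1/3, 1/3]
def DC2 : Matrix (Fin 2) (Fin 2) ℂ := !![1/3, 0; 0, 1/3]

lemma hblocks : BigC = fromBlocks BC1 0 0 (fromBlocks BC1 0 0 DC2) := by
  ext i j
  rcases i with i | i | i <;> rcases j with j | j | j <;>
    fin_cases i <;> fin_cases j <;>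
      simp [BigC, BigN, B1n, BC1, DC2, Matrix.fromBlocks, Matrix.smul_apply,
        Matrix.map_apply, Matrix.one_apply, Matrix.vecHead, Matrix.vecTail] <;> norm_num

lemma cpBC1 : BC1.charpoly = X * (X - C (1/3 : ℂ)) * (X - C (4/3 : ℂ)) := by
  apply Polynomial.funext
  intro t
  rw [Matrix.charpoly, Matrix.det_fin_three]
  simp [Matrix.charmatrix_apply, BC1, Matrix.diagonal, Matrix.vecHead, Matrix.vecTail]
  ring

lemma cpDC2 : DC2.charpoly = (X - C (1/3 : ℂ))^2 := by
  apply Polynomial.funext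
  intro t
  rw [Matrix.charpoly, Matrix.det_fin_two]
  simp [Matrix.charmatrix_apply, DC2, Matrix.diagonal, Matrix.vecHead, Matrix.vecTail]
  ring

lemma cpBigC : BigC.charpoly = X^2 * (X - C (1/3 : ℂ))^4 * (X - C (4/3 : ℂ))^2 := by
  rw [hblocks, Matrix.charpoly_fromBlocks_zero₁₂, Matrix.charpoly_fromBlocks_zero₁₂,
    cpBC1, cpDC2]
  ring

lemma hpt : pt {0} (symProj 3) = BigC.submatrix eFun eFun := by
  ext x y
  calc pt {0} (symProj 3) x y
      = (Pn (fun i => if i ∈ ({0} : Finset (Fin 3)) then y i else x i)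
          (fun i => if i ∈ ({0} : Finset (Fin 3)) then x i else y i) : ℂ) / 3 :=
        symProj_eq _ _
    _ = (Qn x y : ℂ) / 3 := rfl
    _ = BigC.submatrix eFun eFun x y := by
        rw [key]
        simp [BigC, Matrix.submatrix_apply, Matrix.smul_apply, Matrix.map_apply]
        ring


open Polynomial in
/-- The partial transpose of the symmetric projector of three qubits is PSD with
eigenvalues `0, 0, 1/3, 1/3, 1/3, 1/3, 4/3, 4/3`. -/
theorem stmt5 :
    (pt {0} (symProj 3)).PosSemidef ∧
    (pt {0} (symProj 3)).charpoly =
      X ^ 2 * (X - C (1 / 3 : ℂ)) ^ 4 * (X - C (4 / 3 : ℂ)) ^ 2 := by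
  constructor
  · rw [hpt]
    exact (Matrix.posSemidef_submatrix_equiv eEquiv).mpr psdBigC
  · rw [hpt,
      show BigC.submatrix eFun eFun = (Matrix.reindex eEquiv.symm eEquiv.symm) BigC from rfl,
      Matrix.charpoly_reindex, cpBigC]
end
end

section
/- Let N ≥ 2 and let ρ_DS = Σ_{k=0}^N p_k |S_k^N⟩⟨S_k^N| be a diagonal symmetric N-qubit state (p_k ≥ 0, Σ_k p_k = 1). Let X = {0, 1, …, ⌊N/2⌋ − 1} ⊆ Fin N. Then the partial transpose (ρ_DS)^{T_X} is positive semidefinite if and only if both Hankel matrices M_0(p) and M_1(p) are positive semidefinite. -/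
open scoped ComplexOrder

noncomputable section

open Matrix Finset

lemma psd_map {k : ℕ} {M : Matrix (Fin k) (Fin k) ℝ} (h : M.PosSemidef) :
    (M.map Complex.ofReal).PosSemidef := by
  obtain ⟨B, rfl⟩ : ∃ B : Matrix (Fin k) (Fin k) ℝ, M = Bᴴ * B := by
    open scoped MatrixOrder in exact CStarAlgebra.nonneg_iff_eq_star_mul_self.mp h.nonneg
  have : (Bᴴ * B).map Complex.ofReal = (B.map Complex.ofReal)ᴴ * (B.map Complex.ofReal) := by
    rw [show (Complex.ofReal : ℝ → ℂ) = ⇑Complex.ofRealHom from rfl, Matrix.map_mul]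
    congr 1
    rw [Matrix.conjTranspose_map]
    intro r
    simp [Complex.conj_ofReal]
  rw [this]
  exact Matrix.posSemidef_conjTranspose_mul_self _

lemma coreD (N l r s : ℕ) (p : ℕ → ℝ) (hb : ∀ t, t ≤ s → t + r ≤ (N - l) / 2)
    (hPSD : (hankel N l p).PosSemidef) (u : ℕ → ℂ) :
    0 ≤ ∑ t ∈ Finset.range (s+1), ∑ t' ∈ Finset.range (s+1),
      (starRingEnd ℂ) (u t) * ((p (t + t' + (2*r+l)) / (N.choose (t + t' + (2*r+l))) : ℝ) : ℂ) * u t' := by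
  set e : Fin (s+1) → Fin ((N - l)/2 + 1) := fun t => ⟨t.val + r, by
    have := hb t.val (Nat.lt_succ_iff.mp t.isLt); omega⟩ with he
  set H := ((hankel N l p).map Complex.ofReal).submatrix e e with hH
  have hHpsd : H.PosSemidef := (psd_map hPSD).submatrix e
  set u' : Fin (s+1) → ℂ := fun t => u t.val with hu'
  have key : star u' ⬝ᵥ (H *ᵥ u') = ∑ t ∈ Finset.range (s+1), ∑ t' ∈ Finset.range (s+1),
      (starRingEnd ℂ) (u t) * ((p (t + t' + (2*r+l)) / (N.choose (t + t' + (2*r+l))) : ℝ) : ℂ) * u t' := by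
    simp only [dotProduct, mulVec, dotProduct, Finset.mul_sum]
    simp only [Finset.sum_range]
    refine Finset.sum_congr rfl fun t _ => Finset.sum_congr rfl fun t' _ => ?_
    have harg : (t : ℕ) + r + ((t' : ℕ) + r) + l = (t : ℕ) + (t' : ℕ) + (2*r+l) := by omega
    simp only [hH, Matrix.submatrix_apply, Matrix.map_apply, hankel, he, hu', Pi.star_apply, Complex.star_def, harg]
    ring
  rw [← key]
  exact hHpsd.dotProduct_mulVec_nonneg u'

lemma coreC (N : ℕ) (p : ℕ → ℝ)
    (hM0 : (hankel N 0 p).PosSemidef) (hM1 : (hankel N 1 p).PosSemidef) (W : ℕ × ℕ → ℂ) :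
    0 ≤ ∑ P ∈ (Finset.range (N/2+1)) ×ˢ (Finset.range (N - N/2+1)),
        ∑ Q ∈ (Finset.range (N/2+1)) ×ˢ (Finset.range (N - N/2+1)),
      (starRingEnd ℂ) (W P) *
        (if Q.1 + P.2 = P.1 + Q.2 then ((p (Q.1+P.2) / (N.choose (Q.1+P.2)) : ℝ) : ℂ) else 0)
        * W Q := by
  set m := N/2 with hm
  set n := N - N/2 with hn
  set T := (Finset.range (m+1)) ×ˢ (Finset.range (n+1)) with hT
  set G : ℕ × ℕ → ℕ × ℕ → ℂ := fun P Q =>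
    (starRingEnd ℂ) (W P) *
      (if Q.1 + P.2 = P.1 + Q.2 then ((p (Q.1+P.2) / (N.choose (Q.1+P.2)) : ℝ) : ℂ) else 0)
      * W Q with hG
  show 0 ≤ ∑ P ∈ T, ∑ Q ∈ T, G P Q
  have hsplit : ∀ P ∈ T, ∀ Q ∈ T, G P Q =
      ∑ δ ∈ Finset.range (N+1),
        if P.1 + (n - P.2) = δ ∧ Q.1 + (n - Q.2) = δ then G P Q else 0 := by
    rintro ⟨a, c⟩ hP ⟨b, d⟩ hQ
    simp only [hT, Finset.mem_product, Finset.mem_range] at hP hQ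
    by_cases h : a + (n - c) = b + (n - d)
    · have h1 : ∀ δ, (if a + (n - c) = δ ∧ b + (n - d) = δ then G (a,c) (b,d) else 0)
          = if δ = a + (n - c) then G (a,c) (b,d) else 0 := by
        intro δ; split_ifs with h2 h3 h3 <;> first | rfl | omega
      simp only [h1]
      rw [Finset.sum_ite_eq' (Finset.range (N+1))]
      rw [if_pos (by simp only [Finset.mem_range]; omega)]
    · have hz : G (a,c) (b,d) = 0 := by
        simp only [hG]
        rw [if_neg (by omega)]
        ring
      rw [hz]
      simp
  rw [Finset.sum_congr rfl (fun P hP => Finset.sum_congr rfl (fun Q hQ => hsplit P hP Q hQ))]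
  rw [Finset.sum_congr rfl (fun P (hP : P ∈ T) => Finset.sum_comm (s := T))]
  rw [Finset.sum_comm]
  apply Finset.sum_nonneg
  intro δ hδ
  have hδN : δ ≤ N := by simpa using Nat.lt_succ_iff.mp (Finset.mem_range.mp hδ)
  set s := min m (min n (min δ (N - δ))) with hs
  set L := (δ - n) + (n - δ) with hL
  set E : ℕ → ℕ × ℕ := fun t => (t + (δ - n), t + (n - δ)) with hE
  -- reduce double-sum-with-ifs to sum over the fiber
  have hfib : ∀ P, (P ∈ T ∧ P.1 + (n - P.2) = δ) ↔ P ∈ (Finset.range (s+1)).image E := by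
    rintro ⟨a, c⟩
    simp only [hT, Finset.mem_product, Finset.mem_range, Finset.mem_image, hE, Prod.mk.injEq,
      Nat.lt_succ_iff]
    constructor
    · rintro ⟨⟨ha, hc⟩, hk⟩
      exact ⟨min a c, by omega, by omega, by omega⟩
    · rintro ⟨t, ht, h1, h2⟩
      omega
  have collapse : (∑ P ∈ T, ∑ Q ∈ T,
      if P.1 + (n - P.2) = δ ∧ Q.1 + (n - Q.2) = δ then G P Q else 0)
      = ∑ P ∈ T.filter (fun P => P.1 + (n - P.2) = δ),
        ∑ Q ∈ T.filter (fun Q => Q.1 + (n - Q.2) = δ), G P Q := by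
    rw [Finset.sum_filter]
    apply Finset.sum_congr rfl
    intro P hP
    rw [Finset.sum_filter]
    by_cases h : P.1 + (n - P.2) = δ
    · simp only [h, true_and, if_true]
    · simp only [h, false_and, if_false, if_neg h, Finset.sum_const_zero]
  rw [collapse]
  have hTfilter : T.filter (fun P => P.1 + (n - P.2) = δ) = (Finset.range (s+1)).image E := by
    ext P
    rw [Finset.mem_filter]
    exact hfib P
  rw [hTfilter]
  have hinj : ∀ t ∈ Finset.range (s+1), ∀ t' ∈ Finset.range (s+1), E t = E t' → t = t' := by
    intro t _ t' _ h
    have := congrArg Prod.fst h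
    simp only [hE] at this
    omega
  rw [Finset.sum_image hinj]
  rw [Finset.sum_congr rfl (fun t _ => Finset.sum_image hinj)]
  -- now evaluate G (E t) (E t')
  have hGval : ∀ t t', G (E t) (E t') =
      (starRingEnd ℂ) (W (E t)) * ((p (t + t' + L) / (N.choose (t + t' + L)) : ℝ) : ℂ) * W (E t') := by
    intro t t'
    simp only [hG, hE]
    rw [if_pos (by omega)]
    have harg : t' + (δ - n) + (t + (n - δ)) = t + t' + L := by omega
    rw [harg]
  rw [Finset.sum_congr rfl (fun t _ => Finset.sum_congr rfl (fun t' _ => hGval t t'))]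
  have hPSD : (hankel N (L % 2) p).PosSemidef := by
    rcases Nat.mod_two_eq_zero_or_one L with h | h <;> rw [h] <;> assumption
  have hb : ∀ t, t ≤ s → t + L / 2 ≤ (N - L % 2) / 2 := by
    intro t ht
    omega
  have := coreD N (L % 2) (L / 2) s p hb hPSD (fun t => W (E t))
  simpa only [Nat.div_add_mod] using this

def cA (N : ℕ) (x : Fin N → Fin 2) : ℕ :=
  (Finset.univ.filter (fun i : Fin N => (i : ℕ) < N/2 ∧ x i = 1)).card

def cB (N : ℕ) (x : Fin N → Fin 2) : ℕ :=
  (Finset.univ.filter (fun i : Fin N => ¬ (i : ℕ) < N/2 ∧ x i = 1)).card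

lemma card_filter_val (N : ℕ) (P : ℕ → Prop) [DecidablePred P] :
    (Finset.univ.filter (fun i : Fin N => P i.val)).card = ((Finset.range N).filter P).card := by
  rw [Finset.card_filter, Finset.card_filter,
    ← Fin.sum_univ_eq_sum_range (fun j => if P j then 1 else 0)]

lemma cnt_split (N : ℕ) (x : Fin N → Fin 2) :
    (Finset.univ.filter (fun i => x i = 1)).card = cA N x + cB N x := by
  unfold cA cB
  rw [Finset.card_filter, Finset.card_filter, Finset.card_filter, ← Finset.sum_add_distrib]
  apply Finset.sum_congr rfl
  intro i _
  by_cases h1 : (i : ℕ) < N/2 <;> by_cases h2 : x i = 1 <;> simp [h1, h2]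

lemma cA_le (N : ℕ) (x : Fin N → Fin 2) : cA N x ≤ N/2 := by
  have h1 : cA N x ≤ (Finset.univ.filter (fun i : Fin N => (i : ℕ) < N/2)).card := by
    apply Finset.card_le_card
    intro i hi
    simp only [Finset.mem_filter] at hi ⊢
    exact ⟨hi.1, hi.2.1⟩
  have h2 : (Finset.univ.filter (fun i : Fin N => (i : ℕ) < N/2)).card = N/2 := by
    rw [card_filter_val N (fun j => j < N/2)]
    have : (Finset.range N).filter (fun j => j < N/2) = Finset.range (N/2) := by
      ext j; simp only [Finset.mem_filter, Finset.mem_range]; omega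
    rw [this, Finset.card_range]
  exact h1.trans (le_of_eq h2)

lemma cB_le (N : ℕ) (x : Fin N → Fin 2) : cB N x ≤ N - N/2 := by
  have h1 : cB N x ≤ (Finset.univ.filter (fun i : Fin N => ¬ (i : ℕ) < N/2)).card := by
    apply Finset.card_le_card
    intro i hi
    simp only [Finset.mem_filter] at hi ⊢
    exact ⟨hi.1, hi.2.1⟩
  have h2 : (Finset.univ.filter (fun i : Fin N => ¬ (i : ℕ) < N/2)).card = N - N/2 := by
    rw [card_filter_val N (fun j => ¬ j < N/2)]
    have : (Finset.range N).filter (fun j => ¬ j < N/2) = Finset.Ico (N/2) N := by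
      ext j; simp only [Finset.mem_filter, Finset.mem_range, Finset.mem_Ico]; omega
    rw [this, Nat.card_Ico]
  exact h1.trans (le_of_eq h2)

lemma rhoDS_apply (N : ℕ) (p : ℕ → ℝ) (x y : Fin N → Fin 2) :
    rhoDS N p x y =
      if (Finset.univ.filter (fun i => x i = 1)).card
          = (Finset.univ.filter (fun i => y i = 1)).card
      then ((p ((Finset.univ.filter (fun i => x i = 1)).card)
        / (N.choose ((Finset.univ.filter (fun i => x i = 1)).card)) : ℝ) : ℂ) else 0 := by
  set cx := (Finset.univ.filter (fun i => x i = 1)).card with hcx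
  set cy := (Finset.univ.filter (fun i => y i = 1)).card with hcy
  have hcxN : cx ≤ N := (Finset.card_filter_le _ _).trans (by simp)
  unfold rhoDS dicke
  simp only [← hcx, ← hcy]
  by_cases h : cx = cy
  · rw [if_pos h]
    rw [Finset.sum_eq_single cx]
    · rw [if_pos rfl, if_pos h.symm]
      rw [Complex.star_def, Complex.conj_ofReal, mul_assoc, ← Complex.ofReal_mul,
        ← Complex.ofReal_mul, ← mul_inv, Real.mul_self_sqrt (Nat.cast_nonneg _)]
      rw [div_eq_mul_inv]
    · intro b _ hb
      rw [if_neg (fun hh => hb hh.symm)]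
      ring
    · intro hmem
      exact absurd (Finset.mem_range.mpr (by omega)) hmem
  · rw [if_neg h]
    apply Finset.sum_eq_zero
    intro k _
    by_cases hk : cx = k
    · rw [if_neg (fun hh : cy = k => h (hk.trans hh.symm))]
      simp
    · rw [if_neg hk]
      ring

lemma pt_rhoDS_apply (N : ℕ) (p : ℕ → ℝ) (x y : Fin N → Fin 2) :
    pt (Finset.univ.filter (fun i : Fin N => (i : ℕ) < N / 2)) (rhoDS N p) x y =
      if cA N y + cB N x = cA N x + cB N y
      then ((p (cA N y + cB N x) / (N.choose (cA N y + cB N x)) : ℝ) : ℂ) else 0 := by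
  unfold pt
  rw [rhoDS_apply]
  have key : ∀ u v : Fin N → Fin 2,
      (Finset.univ.filter (fun i =>
        (if i ∈ Finset.univ.filter (fun i : Fin N => (i : ℕ) < N / 2) then u i else v i) = 1)).card
      = cA N u + cB N v := by
    intro u v
    have h1 : (Finset.univ.filter (fun i =>
        (if i ∈ Finset.univ.filter (fun i : Fin N => (i : ℕ) < N / 2) then u i else v i) = 1))
        = Finset.univ.filter (fun i : Fin N =>
          (if (i : ℕ) < N / 2 then u i else v i) = 1) := by
      apply Finset.filter_congr
      intro i _
      simp only [Finset.mem_filter, Finset.mem_univ, true_and]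
    rw [h1, cnt_split N (fun i => if (i : ℕ) < N / 2 then u i else v i)]
    congr 1
    · unfold cA
      apply congrArg
      apply Finset.filter_congr
      intro i _
      by_cases h : (i : ℕ) < N / 2 <;> simp [h]
    · unfold cB
      apply congrArg
      apply Finset.filter_congr
      intro i _
      by_cases h : (i : ℕ) < N / 2 <;> simp [h]
  rw [key y x, key x y]

lemma pt_herm (N : ℕ) (p : ℕ → ℝ) :
    (pt (Finset.univ.filter (fun i : Fin N => (i : ℕ) < N / 2)) (rhoDS N p)).IsHermitian := by
  show _ = _
  ext x y
  rw [Matrix.conjTranspose_apply, pt_rhoDS_apply, pt_rhoDS_apply]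
  by_cases h : cA N x + cB N y = cA N y + cB N x
  · rw [if_pos h, if_pos (by omega), Complex.star_def, Complex.conj_ofReal, h]
  · rw [if_neg h, if_neg (by omega), star_zero]

lemma reverse (N : ℕ) (p : ℕ → ℝ)
    (hM0 : (hankel N 0 p).PosSemidef) (hM1 : (hankel N 1 p).PosSemidef) :
    (pt (Finset.univ.filter (fun i : Fin N => (i : ℕ) < N / 2)) (rhoDS N p)).PosSemidef := by
  refine Matrix.PosSemidef.of_dotProduct_mulVec_nonneg (pt_herm N p) fun v => ?_
  set m := N / 2 with hm
  set n := N - N / 2 with hn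
  set T := (Finset.range (m+1)) ×ˢ (Finset.range (n+1)) with hT
  set key : (Fin N → Fin 2) → ℕ × ℕ := fun x => (cA N x, cB N x) with hkey
  set F : ℕ × ℕ → ℕ × ℕ → ℂ := fun P Q =>
    if Q.1 + P.2 = P.1 + Q.2 then ((p (Q.1+P.2) / (N.choose (Q.1+P.2)) : ℝ) : ℂ) else 0 with hF
  set W : ℕ × ℕ → ℂ := fun P => ∑ x ∈ Finset.univ.filter (fun x => key x = P), v x with hW
  have hWdef : ∀ P, W P = ∑ x ∈ Finset.univ.filter (fun x => key x = P), v x := fun P => rfl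
  have hmaps : ∀ x : Fin N → Fin 2, x ∈ Finset.univ → key x ∈ T := by
    intro x _
    simp only [hT, Finset.mem_product, Finset.mem_range, hkey, Nat.lt_succ_iff]
    exact ⟨cA_le N x, cB_le N x⟩
  have expand : star v ⬝ᵥ ((pt (Finset.univ.filter (fun i : Fin N => (i : ℕ) < N / 2))
      (rhoDS N p)) *ᵥ v) = ∑ x : Fin N → Fin 2, ∑ y : Fin N → Fin 2,
        (starRingEnd ℂ) (v x) * F (key x) (key y) * v y := by
    simp only [dotProduct, Matrix.mulVec, dotProduct, Finset.mul_sum,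
      Pi.star_apply, Complex.star_def]
    apply Finset.sum_congr rfl
    intro x _
    apply Finset.sum_congr rfl
    intro y _
    rw [pt_rhoDS_apply]
    simp only [hF, hkey]
    ring
  rw [expand]
  have inner : ∀ x : Fin N → Fin 2, (∑ y : Fin N → Fin 2,
      (starRingEnd ℂ) (v x) * F (key x) (key y) * v y)
      = ∑ Q ∈ T, (starRingEnd ℂ) (v x) * F (key x) Q * W Q := by
    intro x
    rw [← Finset.sum_fiberwise_of_maps_to hmaps
      (fun y => (starRingEnd ℂ) (v x) * F (key x) (key y) * v y)]
    apply Finset.sum_congr rfl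
    intro Q _
    have step1 : (∑ y ∈ Finset.univ.filter (fun y => key y = Q),
        (starRingEnd ℂ) (v x) * F (key x) (key y) * v y)
        = ∑ y ∈ Finset.univ.filter (fun y => key y = Q),
          (starRingEnd ℂ) (v x) * F (key x) Q * v y := by
      apply Finset.sum_congr rfl
      intro y hy
      rw [(Finset.mem_filter.mp hy).2]
    rw [step1, ← Finset.mul_sum, ← hWdef Q]
  rw [Finset.sum_congr rfl (fun x _ => inner x)]
  rw [← Finset.sum_fiberwise_of_maps_to hmaps
    (fun x => ∑ Q ∈ T, (starRingEnd ℂ) (v x) * F (key x) Q * W Q)]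
  have outer : ∀ P ∈ T, (∑ x ∈ Finset.univ.filter (fun x => key x = P),
      ∑ Q ∈ T, (starRingEnd ℂ) (v x) * F (key x) Q * W Q)
      = ∑ Q ∈ T, (starRingEnd ℂ) (W P) * F P Q * W Q := by
    intro P _
    rw [Finset.sum_comm]
    apply Finset.sum_congr rfl
    intro Q _
    have step1 : (∑ x ∈ Finset.univ.filter (fun x => key x = P),
        (starRingEnd ℂ) (v x) * F (key x) Q * W Q)
        = ∑ x ∈ Finset.univ.filter (fun x => key x = P),
          (starRingEnd ℂ) (v x) * (F P Q * W Q) := by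
      apply Finset.sum_congr rfl
      intro x hx
      rw [(Finset.mem_filter.mp hx).2, mul_assoc]
    rw [step1, ← Finset.sum_mul, ← map_sum, ← hWdef P, mul_assoc]
  rw [Finset.sum_congr rfl outer]
  exact coreC N p hM0 hM1 W

def rep (N a c : ℕ) : Fin N → Fin 2 := fun i =>
  if (i : ℕ) < N/2 then (if (i : ℕ) < a then 1 else 0)
  else (if (i : ℕ) < N/2 + c then 1 else 0)

lemma cA_rep (N a c : ℕ) (h : a ≤ N/2) : cA N (rep N a c) = a := by
  unfold cA rep
  have h1 : (Finset.univ.filter (fun i : Fin N => (i : ℕ) < N/2 ∧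
      (if (i : ℕ) < N/2 then (if (i : ℕ) < a then 1 else 0)
        else (if (i : ℕ) < N/2 + c then (1 : Fin 2) else 0)) = 1))
      = Finset.univ.filter (fun i : Fin N => (i : ℕ) < a) := by
    apply Finset.filter_congr
    intro i _
    by_cases h1 : (i : ℕ) < N/2 <;> by_cases h2 : (i : ℕ) < a <;>
      simp [h1, h2] <;> omega
  rw [h1, card_filter_val N (fun j => j < a)]
  have h2 : (Finset.range N).filter (fun j => j < a) = Finset.range a := by
    ext j; simp only [Finset.mem_filter, Finset.mem_range]
    have : a ≤ N := h.trans (Nat.div_le_self N 2)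
    omega
  rw [h2, Finset.card_range]

lemma cB_rep (N a c : ℕ) (h : c ≤ N - N/2) : cB N (rep N a c) = c := by
  unfold cB rep
  have h1 : (Finset.univ.filter (fun i : Fin N => ¬ (i : ℕ) < N/2 ∧
      (if (i : ℕ) < N/2 then (if (i : ℕ) < a then 1 else 0)
        else (if (i : ℕ) < N/2 + c then (1 : Fin 2) else 0)) = 1))
      = Finset.univ.filter (fun i : Fin N => ¬ (i : ℕ) < N/2 ∧ (i : ℕ) < N/2 + c) := by
    apply Finset.filter_congr
    intro i _
    by_cases h1 : (i : ℕ) < N/2 <;> by_cases h2 : (i : ℕ) < N/2 + c <;>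
      simp [h1, h2] <;> omega
  rw [h1, card_filter_val N (fun j => ¬ j < N/2 ∧ j < N/2 + c)]
  have h2 : (Finset.range N).filter (fun j => ¬ j < N/2 ∧ j < N/2 + c)
      = Finset.Ico (N/2) (N/2 + c) := by
    ext j; simp only [Finset.mem_filter, Finset.mem_range, Finset.mem_Ico]
    omega
  rw [h2, Nat.card_Ico]
  omega

lemma rep_inj (N a c a' c' : ℕ) (ha : a ≤ N/2) (hc : c ≤ N - N/2)
    (ha' : a' ≤ N/2) (hc' : c' ≤ N - N/2) (h : rep N a c = rep N a' c') :
    a = a' ∧ c = c' := by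
  constructor
  · rw [← cA_rep N a c ha, ← cA_rep N a' c' ha', h]
  · rw [← cB_rep N a c hc, ← cB_rep N a' c' hc', h]

lemma forward (N : ℕ) (p : ℕ → ℝ) (l : ℕ) (hl : l ≤ 1) (hlN : l ≤ N)
    (h : (pt (Finset.univ.filter (fun i : Fin N => (i : ℕ) < N / 2)) (rhoDS N p)).PosSemidef) :
    (hankel N l p).PosSemidef := by
  refine Matrix.PosSemidef.of_dotProduct_mulVec_nonneg ?_ ?_
  · show _ = _
    ext i j
    rw [Matrix.conjTranspose_apply, star_trivial]
    unfold hankel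
    have : (j : ℕ) + (i : ℕ) + l = (i : ℕ) + (j : ℕ) + l := by omega
    rw [this]
  · intro u
    have hrange : ∀ a : Fin ((N - l)/2 + 1), (a : ℕ) ≤ N/2 ∧ (a : ℕ) + l ≤ N - N/2 := by
      intro a
      have := Nat.lt_succ_iff.mp a.isLt
      omega
    set v : (Fin N → Fin 2) → ℂ := fun x =>
      ∑ a : Fin ((N - l)/2 + 1), if x = rep N a ((a : ℕ) + l) then (u a : ℂ) else 0 with hv
    have hsum : ∀ f : (Fin N → Fin 2) → ℂ,
        (∑ x : Fin N → Fin 2, f x * v x)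
          = ∑ a : Fin ((N - l)/2 + 1), f (rep N a ((a : ℕ) + l)) * (u a : ℂ) := by
      intro f
      simp only [hv, Finset.mul_sum]
      rw [Finset.sum_comm]
      apply Finset.sum_congr rfl
      intro a _
      simp only [mul_ite, mul_zero]
      rw [Finset.sum_ite_eq' Finset.univ (rep N a ((a : ℕ) + l)) (fun x => f x * (u a : ℂ))]
      simp
    have main : star v ⬝ᵥ ((pt (Finset.univ.filter (fun i : Fin N => (i : ℕ) < N / 2))
        (rhoDS N p)) *ᵥ v) = ((star u ⬝ᵥ (hankel N l p *ᵥ u) : ℝ) : ℂ) := by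
      have e1 : star v ⬝ᵥ ((pt (Finset.univ.filter (fun i : Fin N => (i : ℕ) < N / 2))
          (rhoDS N p)) *ᵥ v) = ∑ x : Fin N → Fin 2, (∑ y : Fin N → Fin 2,
            (pt (Finset.univ.filter (fun i : Fin N => (i : ℕ) < N / 2)) (rhoDS N p)) x y * v y)
            * star (v x) := by
        simp only [dotProduct, Matrix.mulVec, dotProduct, Pi.star_apply]
        apply Finset.sum_congr rfl
        intro x _
        ring
      rw [e1]
      have e2 : ∀ x, star (v x) = ∑ a : Fin ((N - l)/2 + 1),
          if x = rep N a ((a : ℕ) + l) then (u a : ℂ) else 0 := by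
        intro x
        simp only [hv, star_sum]
        apply Finset.sum_congr rfl
        intro a _
        split_ifs <;> simp [Complex.star_def, Complex.conj_ofReal]
      have e2' : ∀ x, star (v x) = v x := by
        intro x; rw [e2 x]
      have e3 : (∑ x : Fin N → Fin 2, (∑ y : Fin N → Fin 2,
          (pt (Finset.univ.filter (fun i : Fin N => (i : ℕ) < N / 2)) (rhoDS N p)) x y * v y)
          * star (v x)) = ∑ x : Fin N → Fin 2, (∑ y : Fin N → Fin 2,
          (pt (Finset.univ.filter (fun i : Fin N => (i : ℕ) < N / 2)) (rhoDS N p)) x y * v y)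
          * v x := by
        apply Finset.sum_congr rfl
        intro x _
        rw [e2' x]
      rw [e3, hsum (fun x => ∑ y : Fin N → Fin 2,
        (pt (Finset.univ.filter (fun i : Fin N => (i : ℕ) < N / 2)) (rhoDS N p)) x y * v y)]
      have e4 : ∀ a : Fin ((N - l)/2 + 1), (∑ y : Fin N → Fin 2,
          (pt (Finset.univ.filter (fun i : Fin N => (i : ℕ) < N / 2)) (rhoDS N p))
            (rep N a ((a : ℕ) + l)) y * v y)
          = ∑ b : Fin ((N - l)/2 + 1),
            (pt (Finset.univ.filter (fun i : Fin N => (i : ℕ) < N / 2)) (rhoDS N p))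
              (rep N a ((a : ℕ) + l)) (rep N b ((b : ℕ) + l)) * (u b : ℂ) := by
        intro a
        exact hsum (fun y => (pt (Finset.univ.filter (fun i : Fin N => (i : ℕ) < N / 2))
          (rhoDS N p)) (rep N a ((a : ℕ) + l)) y)
      rw [Finset.sum_congr rfl (fun a (_ : a ∈ Finset.univ) => by rw [e4 a])]
      have e5 : ∀ a b : Fin ((N - l)/2 + 1),
          (pt (Finset.univ.filter (fun i : Fin N => (i : ℕ) < N / 2)) (rhoDS N p))
            (rep N a ((a : ℕ) + l)) (rep N b ((b : ℕ) + l))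
          = ((p ((a : ℕ) + (b : ℕ) + l) / (N.choose ((a : ℕ) + (b : ℕ) + l)) : ℝ) : ℂ) := by
        intro a b
        rw [pt_rhoDS_apply, cA_rep N _ _ (hrange a).1, cA_rep N _ _ (hrange b).1,
          cB_rep N _ _ (hrange a).2, cB_rep N _ _ (hrange b).2, if_pos (by omega)]
        have : (b : ℕ) + ((a : ℕ) + l) = (a : ℕ) + (b : ℕ) + l := by omega
        rw [this]
      simp only [dotProduct, Matrix.mulVec, hankel, Pi.star_apply, star_trivial]
      push_cast
      apply Finset.sum_congr rfl
      intro a _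
      rw [Finset.mul_sum, Finset.sum_mul]
      apply Finset.sum_congr rfl
      intro b _
      rw [e5 a b]
      push_cast
      ring
    rw [show star u = u from star_trivial u] at main
    have := h.dotProduct_mulVec_nonneg v
    rw [main] at this
    exact Complex.zero_le_real.mp this

/-- PPT of a diagonal symmetric state across the half-half bipartition is equivalent
to positive semidefiniteness of the two Hankel matrices `M₀(p)` and `M₁(p)`. -/
theorem stmt7 (N : ℕ) (hN : 2 ≤ N) (p : ℕ → ℝ) (hp : ∀ k ≤ N, 0 ≤ p k)
    (hsum : ∑ k ∈ Finset.range (N + 1), p k = 1) :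
    (pt (Finset.univ.filter (fun i : Fin N => (i : ℕ) < N / 2)) (rhoDS N p)).PosSemidef ↔
      (hankel N 0 p).PosSemidef ∧ (hankel N 1 p).PosSemidef := by
  constructor
  · intro h
    exact ⟨forward N p 0 (by norm_num) (by omega) h, forward N p 1 (by norm_num) (by omega) h⟩
  · rintro ⟨h0, h1⟩
    exact reverse N p h0 h1
end
end

section
/- Let N = 3 and let ρ_DS = Σ_{k=0}^3 p_k |S_k^3⟩⟨S_k^3| be a diagonal symmetric 3-qubit state (p_k ≥ 0, Σ_k p_k = 1). Then for every real α with −2/3 ≤ α ≤ √3 − 1, the matrix σ = 𝟙_S + α·ρ_DS is fully separable. -/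
open scoped ComplexOrder

noncomputable section

set_option maxHeartbeats 1000000


lemma outer_psd (c : ℝ) (hc : 0 ≤ c) (v : Fin 2 → ℂ) :
    Matrix.PosSemidef (Matrix.of fun a b => (c:ℂ) * v a * star (v b)) := by
  rw [Matrix.posSemidef_iff_dotProduct_mulVec]
  constructor
  · ext a b
    simp only [Matrix.conjTranspose_apply, Matrix.of_apply, star_mul', star_star,
      Complex.star_def, Complex.conj_ofReal, Complex.conj_conj]
    ring
  · intro x
    set z : ℂ := ∑ b, star (v b) * x b with hz
    have key : dotProduct (star x)
        ((Matrix.of fun a b => (c:ℂ) * v a * star (v b)).mulVec x) = (c:ℂ) * (star z * z) := by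
      simp only [hz, dotProduct, Matrix.mulVec, Matrix.of_apply, Fin.sum_univ_two,
        Pi.star_apply, star_add, star_mul', star_star]
      ring
    rw [key]
    exact mul_nonneg (by exact_mod_cast hc) (star_mul_self_nonneg z)

lemma prod_fin2 (f : Fin 2 → ℂ) (z : Fin 3 → Fin 2) :
    ∏ i, f (z i) = f 1 ^ ((Finset.univ.filter (fun i => z i = 1)).card)
      * f 0 ^ (3 - (Finset.univ.filter (fun i => z i = 1)).card) := by
  rw [← Finset.prod_filter_mul_prod_filter_not Finset.univ (fun i => z i = 1)]
  have h1 : ∀ i ∈ Finset.univ.filter (fun i => z i = 1), f (z i) = f 1 := by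
    intro i hi; simp at hi; rw [hi]
  have h2 : ∀ i ∈ Finset.univ.filter (fun i => ¬ z i = 1), f (z i) = f 0 := by
    intro i hi; simp at hi
    have : z i = 0 := by omega
    rw [this]
  rw [Finset.prod_congr rfl h1, Finset.prod_congr rfl h2, Finset.prod_const, Finset.prod_const]
  congr 1
  rw [Finset.filter_not, Finset.card_sdiff_of_subset (Finset.filter_subset _ _)]
  simp

lemma sep_ineq (pa pb pc α : ℝ) (h0 : 0 ≤ pa) (h1 : 0 ≤ pb) (h2 : 0 ≤ pc)
    (hs : pa + pb + pc ≤ 1) (ha1 : -(2/3:ℝ) ≤ α) (ha2 : α ≤ Real.sqrt 3 - 1) :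
    (1 + α * pb)^2 ≤ 3 * (1 + α * pa) * (1 + α * pc) := by
  have h3' : Real.sqrt 3 ^ 2 = 3 := Real.sq_sqrt (by norm_num)
  have hs3 : (1:ℝ) ≤ Real.sqrt 3 := by nlinarith [Real.sqrt_nonneg 3]
  rcases le_or_gt α 0 with h | h
  · nlinarith [mul_nonneg (neg_nonneg.2 h) (by linarith : (0:ℝ) ≤ 1 - pa - pc),
      mul_nonneg (sq_nonneg α) (mul_nonneg h0 h2),
      mul_nonneg (by nlinarith : (0:ℝ) ≤ α * pb + 2/3) (by nlinarith : (0:ℝ) ≤ -(α * pb))]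
  · nlinarith [mul_nonneg (mul_nonneg h.le (by linarith : (0:ℝ) ≤ 1 - pb))
        (by nlinarith : (0:ℝ) ≤ 2 + α + α * pb),
      mul_nonneg (by linarith : (0:ℝ) ≤ Real.sqrt 3 - 1 - α)
        (by nlinarith : (0:ℝ) ≤ Real.sqrt 3 + 1 + α),
      mul_nonneg (mul_nonneg h.le h0) (mul_nonneg h.le h2),
      mul_nonneg h.le h0, mul_nonneg h.le h2]

lemma dicke_mul_star (x y : Fin 3 → Fin 2) (k : ℕ) :
    dicke 3 k x * star (dicke 3 k y) =
    if (Finset.univ.filter (fun i => x i = 1)).card = k ∧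
        (Finset.univ.filter (fun i => y i = 1)).card = k
    then ((((3:ℕ).choose k : ℝ))⁻¹ : ℂ) else 0 := by
  by_cases hx : (Finset.univ.filter (fun i => x i = 1)).card = k <;>
    by_cases hy : (Finset.univ.filter (fun i => y i = 1)).card = k <;>
    simp [dicke, hx, hy, Complex.star_def, Complex.conj_ofReal]
  rw [← mul_inv, ← Complex.ofReal_mul, Real.mul_self_sqrt (Nat.cast_nonneg _)]
  push_cast
  ring

def qv (p : ℕ → ℝ) (α : ℝ) : ℕ → ℝ := fun k => 1 + α * p k

def tv (p : ℕ → ℝ) (α : ℝ) : ℝ := Real.sqrt (qv p α 2 / qv p α 1)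

def cs (p : ℕ → ℝ) (α : ℝ) : Fin 6 → ℝ := fun k =>
  if k = 0 then qv p α 0 - (qv p α 1)^2 / (3 * qv p α 2)
  else if k = 1 then qv p α 3 - (qv p α 2)^2 / (3 * qv p α 1)
  else (qv p α 1)^2 / (12 * qv p α 2)

def Vs (p : ℕ → ℝ) (α : ℝ) : Fin 6 → Fin 2 → ℂ := fun k =>
  if k = 0 then ![1, 0] else if k = 1 then ![0, 1]
  else ![1, (tv p α : ℂ) * Complex.I ^ (k : ℕ)]

/-- For three-qubit diagonal symmetric states, `𝟙_S + α ρ_DS` is fully separable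
for `-2/3 ≤ α ≤ √3 - 1`. -/
theorem stmt9 (p : ℕ → ℝ) (hp : ∀ k ≤ 3, 0 ≤ p k)
    (hsum : ∑ k ∈ Finset.range 4, p k = 1)
    (α : ℝ) (hα1 : -(2 / 3 : ℝ) ≤ α) (hα2 : α ≤ Real.sqrt 3 - 1) :
    FullySep (symProj 3 + (α : ℂ) • rhoDS 3 p) := by
  have hp0 := hp 0 (by norm_num); have hp1 := hp 1 (by norm_num)
  have hp2 := hp 2 (by norm_num); have hp3 := hp 3 (by norm_num)
  have hsum' : p 0 + p 1 + p 2 + p 3 = 1 := by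
    simpa [Finset.sum_range_succ] using hsum
  have hM0 : (qv p α 1)^2 ≤ 3 * (qv p α 0) * (qv p α 2) :=
    sep_ineq (p 0) (p 1) (p 2) α hp0 hp1 hp2 (by linarith) hα1 hα2
  have hM1 : (qv p α 2)^2 ≤ 3 * (qv p α 1) * (qv p α 3) :=
    sep_ineq (p 1) (p 2) (p 3) α hp1 hp2 hp3 (by linarith) hα1 hα2
  have hqpos : ∀ k ≤ 3, 0 < qv p α k := by
    intro k hk
    have h1 := hp k hk
    have h2 : p k ≤ 1 := by interval_cases k <;> linarith
    have : 0 ≤ (α + 2/3) * p k := mul_nonneg (by linarith) h1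
    simp only [qv]; nlinarith
  have hq1 := hqpos 1 (by norm_num)
  have hq2 := hqpos 2 (by norm_num)
  have ht2 : (tv p α)^2 = qv p α 2 / qv p α 1 :=
    Real.sq_sqrt (div_nonneg hq2.le hq1.le)
  have hcnn : ∀ k : Fin 6, 0 ≤ cs p α k := by
    intro k
    simp only [cs]
    split_ifs
    · rw [sub_nonneg, div_le_iff₀ (by positivity)]; nlinarith
    · rw [sub_nonneg, div_le_iff₀ (by positivity)]; nlinarith
    · positivity
  refine ⟨6, fun k i => Matrix.of fun a b =>
      (((if i = 0 then cs p α k else 1 : ℝ)):ℂ) * Vs p α k a * star (Vs p α k b),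
      fun k i => outer_psd _ (by split_ifs; exacts [hcnn k, zero_le_one]) _,
      fun x y => ?_⟩
  have hL : (symProj 3 + (α:ℂ) • rhoDS 3 p) x y
      = ∑ k ∈ Finset.range 4, ((qv p α k : ℝ):ℂ) * (dicke 3 k x * star (dicke 3 k y)) := by
    simp only [Matrix.add_apply, Matrix.smul_apply, symProj, rhoDS, smul_eq_mul,
      Finset.mul_sum, ← Finset.sum_add_distrib, Nat.reduceAdd]
    refine Finset.sum_congr rfl fun k _ => by simp only [qv]; push_cast; try ring
  have hR : ∀ k : Fin 6, (∏ i, (Matrix.of fun a b =>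
        (((if i = 0 then cs p α k else 1 : ℝ)):ℂ) * Vs p α k a * star (Vs p α k b)) (x i) (y i))
      = (cs p α k : ℂ)
        * ((Vs p α k 1) ^ ((Finset.univ.filter (fun i => x i = 1)).card)
          * (Vs p α k 0) ^ (3 - (Finset.univ.filter (fun i => x i = 1)).card))
        * ((star (Vs p α k 1)) ^ ((Finset.univ.filter (fun i => y i = 1)).card)
          * (star (Vs p α k 0)) ^ (3 - (Finset.univ.filter (fun i => y i = 1)).card)) := by
    intro k
    simp only [Matrix.of_apply]
    rw [Finset.prod_mul_distrib, Finset.prod_mul_distrib,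
      prod_fin2 (Vs p α k) x, prod_fin2 (fun j => star (Vs p α k j)) y]
    have hw : ∏ i : Fin 3, (((if i = 0 then cs p α k else 1 : ℝ)):ℂ) = (cs p α k : ℂ) := by
      rw [Fin.prod_univ_three]
      norm_num [Fin.ext_iff]
    rw [hw]
    try ring
  rw [hL, Fin.sum_univ_six]
  simp only [hR]
  set na := (Finset.univ.filter (fun i => x i = 1)).card with hna
  set nb := (Finset.univ.filter (fun i => y i = 1)).card with hnb
  have ha3 : na ≤ 3 := by
    rw [hna]; exact (Finset.card_filter_le _ _).trans (by simp)
  have hb3 : nb ≤ 3 := by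
    rw [hnb]; exact (Finset.card_filter_le _ _).trans (by simp)
  simp only [dicke_mul_star, ← hna, ← hnb]
  -- explicit values of the six vectors and coefficients
  have hI2 : Complex.I ^ (2:ℕ) = -1 := Complex.I_sq
  have hI3 : Complex.I ^ (3:ℕ) = -Complex.I := by rw [pow_succ, hI2]; ring
  have hI4 : Complex.I ^ (4:ℕ) = 1 := by rw [pow_succ, hI3]; simp [Complex.I_mul_I]
  have hI5 : Complex.I ^ (5:ℕ) = Complex.I := by rw [pow_succ, hI4]; ring
  have hI6 : Complex.I ^ (6:ℕ) = -1 := by rw [pow_succ, hI5, Complex.I_mul_I]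
  have hV0 : Vs p α 0 = ![1, 0] := by simp [Vs]
  have hV1 : Vs p α 1 = ![0, 1] := by
    simp [Vs, show (1:Fin 6) ≠ 0 by decide]
  have hV2 : Vs p α 2 = ![1, -(tv p α : ℂ)] := by
    simp only [Vs, show (2:Fin 6) ≠ 0 by decide, show (2:Fin 6) ≠ 1 by decide, if_false,
      show ((2:Fin 6):ℕ) = 2 from rfl, hI2]
    funext j; fin_cases j <;> simp
  have hV3 : Vs p α 3 = ![1, -((tv p α : ℂ) * Complex.I)] := by
    simp only [Vs, show (3:Fin 6) ≠ 0 by decide, show (3:Fin 6) ≠ 1 by decide, if_false,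
      show ((3:Fin 6):ℕ) = 3 from rfl, hI3]
    funext j; fin_cases j <;> simp
  have hV4 : Vs p α 4 = ![1, (tv p α : ℂ)] := by
    simp only [Vs, show (4:Fin 6) ≠ 0 by decide, show (4:Fin 6) ≠ 1 by decide, if_false,
      show ((4:Fin 6):ℕ) = 4 from rfl, hI4]
    funext j; fin_cases j <;> simp
  have hV5 : Vs p α 5 = ![1, (tv p α : ℂ) * Complex.I] := by
    simp only [Vs, show (5:Fin 6) ≠ 0 by decide, show (5:Fin 6) ≠ 1 by decide, if_false,
      show ((5:Fin 6):ℕ) = 5 from rfl, hI5]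
  have hcs0 : cs p α 0 = qv p α 0 - (qv p α 1)^2 / (3 * qv p α 2) := by simp [cs]
  have hcs1 : cs p α 1 = qv p α 3 - (qv p α 2)^2 / (3 * qv p α 1) := by
    simp [cs, show (1:Fin 6) ≠ 0 by decide]
  have hcs2 : cs p α 2 = (qv p α 1)^2 / (12 * qv p α 2) := by
    simp [cs, show (2:Fin 6) ≠ 0 by decide, show (2:Fin 6) ≠ 1 by decide]
  have hcs3 : cs p α 3 = (qv p α 1)^2 / (12 * qv p α 2) := by
    simp [cs, show (3:Fin 6) ≠ 0 by decide, show (3:Fin 6) ≠ 1 by decide]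
  have hcs4 : cs p α 4 = (qv p α 1)^2 / (12 * qv p α 2) := by
    simp [cs, show (4:Fin 6) ≠ 0 by decide, show (4:Fin 6) ≠ 1 by decide]
  have hcs5 : cs p α 5 = (qv p α 1)^2 / (12 * qv p α 2) := by
    simp [cs, show (5:Fin 6) ≠ 0 by decide, show (5:Fin 6) ≠ 1 by decide]
  simp only [hV0, hV1, hV2, hV3, hV4, hV5, hcs0, hcs1, hcs2, hcs3, hcs4, hcs5,
    Matrix.cons_val_zero, Matrix.cons_val_one, Matrix.head_cons, star_one, star_zero, star_neg,
    Complex.star_def, map_mul, Complex.conj_ofReal, Complex.conj_I,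
    Finset.sum_range_succ, Finset.sum_range_zero]
  have hq1C : ((qv p α 1 : ℝ):ℂ) ≠ 0 := by exact_mod_cast hq1.ne'
  have hq2C : ((qv p α 2 : ℝ):ℂ) ≠ 0 := by exact_mod_cast hq2.ne'
  have ht2C : ((tv p α : ℝ):ℂ)^2 = ((qv p α 2 : ℝ):ℂ) / ((qv p α 1 : ℝ):ℂ) := by
    rw [← Complex.ofReal_pow, ht2]; push_cast; ring
  have ht4C : ((tv p α : ℝ):ℂ)^4 = (((qv p α 2 : ℝ):ℂ) / ((qv p α 1 : ℝ):ℂ))^2 := by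
    rw [show (4:ℕ) = 2*2 from rfl, pow_mul, ht2C]
  have ht6C : ((tv p α : ℝ):ℂ)^6 = (((qv p α 2 : ℝ):ℂ) / ((qv p α 1 : ℝ):ℂ))^3 := by
    rw [show (6:ℕ) = 3*2 from rfl, mul_comm, pow_mul, ht2C]
  interval_cases na <;> interval_cases nb <;>
  · norm_num [Nat.choose]
    try ring_nf
    try simp only [hI2, hI3, hI4, hI5, hI6]
    try ring_nf
    try simp only [ht2C, ht4C, ht6C]
    try field_simp
    try ring
end
end

section
/- Let N ≥ 2 and let σ be a positive semidefinite N-qubit operator that is invariant under partial transposition of qubit 0, i.e. σ^{T_{{0}}} = σ. Then σ is biseparable across the 1:(N−1) bipartition at qubit 0. -/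
open scoped ComplexOrder

noncomputable section

set_option linter.unusedSectionVars false

namespace Stmt14Aux

open Matrix

variable {m : Type} [Fintype m] [DecidableEq m]

lemma psd_vecMulVec (u : m → ℂ) : (vecMulVec u (star u)).PosSemidef := by
  refine PosSemidef.of_dotProduct_mulVec_nonneg ?_ ?_
  · ext i j
    simp [vecMulVec_apply, conjTranspose_apply, mul_comm]
  · intro x
    have h1 : (vecMulVec u (star u)) *ᵥ x = (star u ⬝ᵥ x) • u := by
      ext i
      simp only [vecMulVec_apply, mulVec, dotProduct, Pi.smul_apply, smul_eq_mul,
        Finset.sum_mul]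
      exact Finset.sum_congr rfl fun j _ => by ring
    rw [h1]
    have h2 : star x ⬝ᵥ ((star u ⬝ᵥ x) • u) = (star u ⬝ᵥ x) * (star x ⬝ᵥ u) := by
      simp [dotProduct_smul, smul_eq_mul]
    rw [h2]
    have h3 : star x ⬝ᵥ u = star (star u ⬝ᵥ x) := by
      simp [dotProduct, Finset.sum_comm, star_sum, mul_comm]
    rw [h3, mul_comm]
    exact star_mul_self_nonneg _

omit [DecidableEq m] in
lemma dot_shift (M : Matrix m m ℂ) (u w : m → ℂ) :
    star (M *ᵥ u) ⬝ᵥ w = star u ⬝ᵥ (Mᴴ *ᵥ w) := by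
  rw [star_mulVec, dotProduct_mulVec]


section Spec

variable {M : Matrix m m ℂ} (hM : M.IsHermitian)

/-- Functional calculus via the spectral theorem. -/
def specF (h : ℝ → ℝ) : Matrix m m ℂ :=
  (hM.eigenvectorUnitary : Matrix m m ℂ) *
    diagonal (fun i => (h (hM.eigenvalues i) : ℂ)) *
    (star (hM.eigenvectorUnitary : Matrix m m ℂ))

lemma specF_mul (h h' : ℝ → ℝ) :
    specF hM h * specF hM h' = specF hM (fun t => h t * h' t) := by
  have hU : (star (hM.eigenvectorUnitary : Matrix m m ℂ)) *
      (hM.eigenvectorUnitary : Matrix m m ℂ) = 1 := by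
    simpa using unitary.coe_star_mul_self hM.eigenvectorUnitary
  unfold specF
  simp only [Matrix.mul_assoc]
  rw [← Matrix.mul_assoc (star (hM.eigenvectorUnitary : Matrix m m ℂ))
    (hM.eigenvectorUnitary : Matrix m m ℂ), hU, one_mul,
    ← Matrix.mul_assoc (diagonal _) (diagonal _), diagonal_mul_diagonal]
  congr 3
  ext i
  push_cast
  ring

lemma specF_congr {h h' : ℝ → ℝ} (he : ∀ i, h (hM.eigenvalues i) = h' (hM.eigenvalues i)) :
    specF hM h = specF hM h' := by
  unfold specF
  have : (fun i => (h (hM.eigenvalues i) : ℂ)) = fun i => (h' (hM.eigenvalues i) : ℂ) :=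
    funext fun i => by rw [he i]
  rw [this]

lemma specF_id : specF hM id = M := by
  exact hM.spectral_theorem.symm

lemma specF_one : specF hM (fun _ => 1) = 1 := by
  have hU : (hM.eigenvectorUnitary : Matrix m m ℂ) *
      (star (hM.eigenvectorUnitary : Matrix m m ℂ)) = 1 := by
    simpa using unitary.coe_mul_star_self hM.eigenvectorUnitary
  unfold specF
  simpa using hU

lemma specF_zero : specF hM (fun _ => 0) = 0 := by
  unfold specF
  simp

lemma specF_add (h h' : ℝ → ℝ) :
    specF hM h + specF hM h' = specF hM (fun t => h t + h' t) := by
  unfold specF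
  rw [← add_mul, ← mul_add]
  congr 2
  ext i j
  simp only [Matrix.add_apply, diagonal_apply]
  split
  · push_cast; ring
  · simp

lemma specF_herm (h : ℝ → ℝ) : (specF hM h).IsHermitian := by
  unfold specF Matrix.IsHermitian
  rw [conjTranspose_mul, conjTranspose_mul, diagonal_conjTranspose]
  rw [star_eq_conjTranspose, conjTranspose_conjTranspose, mul_assoc]
  congr 2
  ext i
  simp [Pi.star_def, Complex.conj_ofReal]

lemma specF_psd (h : ℝ → ℝ) (hh : ∀ i, 0 ≤ h (hM.eigenvalues i)) :
    (specF hM h).PosSemidef := by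
  have : (diagonal (fun i => (h (hM.eigenvalues i) : ℂ))).PosSemidef :=
    posSemidef_diagonal_iff.mpr fun i => Complex.zero_le_real.mpr (hh i)
  have h2 := this.mul_mul_conjTranspose_same (hM.eigenvectorUnitary : Matrix m m ℂ)
  rw [← star_eq_conjTranspose] at h2
  exact h2

lemma specF_sum (h : ℝ → ℝ) :
    specF hM h = ∑ i, (h (hM.eigenvalues i) : ℂ) •
      vecMulVec (fun j => (hM.eigenvectorUnitary : Matrix m m ℂ) j i)
        (star (fun j => (hM.eigenvectorUnitary : Matrix m m ℂ) j i)) := by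
  ext f g
  unfold specF
  rw [mul_assoc, mul_apply]
  rw [Matrix.sum_apply]
  refine Finset.sum_congr rfl fun i _ => ?_
  rw [diagonal_mul, Matrix.smul_apply, vecMulVec_apply]
  simp only [star_apply, smul_eq_mul, Pi.star_apply]
  ring

end Spec


section Core

variable (A B C : Matrix m m ℂ)

set_option maxHeartbeats 1000000 in
lemma core (hF : (Matrix.fromBlocks A B B C).PosSemidef) (hB : B.IsHermitian) :
    ∃ (K : ℕ) (Q : Fin K → Matrix (Fin 2) (Fin 2) ℂ) (E : Fin K → Matrix m m ℂ),
      (∀ k, (Q k).PosSemidef) ∧ (∀ k, (E k).PosSemidef) ∧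
      (∀ f g, A f g = ∑ k, Q k 0 0 * E k f g) ∧
      (∀ f g, B f g = ∑ k, Q k 0 1 * E k f g) ∧
      (∀ f g, B f g = ∑ k, Q k 1 0 * E k f g) ∧
      (∀ f g, C f g = ∑ k, Q k 1 1 * E k f g) := by
  classical
  have hA : A.PosSemidef := by
    have h := hF.submatrix Sum.inl
    have he : ((Matrix.fromBlocks A B B C).submatrix Sum.inl Sum.inl) = A := by
      ext f g; rfl
    rwa [he] at h
  have hC : C.PosSemidef := by
    have h := hF.submatrix Sum.inr
    have he : ((Matrix.fromBlocks A B B C).submatrix Sum.inr Sum.inr) = C := by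
      ext f g; rfl
    rwa [he] at h
  have hCH : C.IsHermitian := hC.1
  have hc0 : ∀ i, 0 ≤ hCH.eigenvalues i := hC.eigenvalues_nonneg
  set sq : ℝ → ℝ := Real.sqrt with hsq
  set gi : ℝ → ℝ := fun t => if t = 0 then 0 else (Real.sqrt t)⁻¹ with hgi
  set pp : ℝ → ℝ := fun t => if t = 0 then 0 else 1 with hppd
  set di : ℝ → ℝ := fun t => if t = 0 then 0 else t⁻¹ with hdi
  set pc : ℝ → ℝ := fun t => if t = 0 then 1 else 0 with hpc
  set R := specF hCH sq with hRdef
  set G := specF hCH gi with hGdef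
  set P := specF hCH pp with hPdef
  set D := specF hCH di with hDdef
  set P' := specF hCH pc with hP'def
  have hRherm : R.IsHermitian := specF_herm hCH sq
  have hsqrtne : ∀ i, hCH.eigenvalues i ≠ 0 → Real.sqrt (hCH.eigenvalues i) ≠ 0 := by
    intro i hi
    exact Real.sqrt_ne_zero'.mpr (lt_of_le_of_ne (hc0 i) (Ne.symm hi))
  have hRR : R * R = C := by
    rw [hRdef, specF_mul,
      specF_congr hCH (h' := id) (fun i => Real.mul_self_sqrt (hc0 i)), specF_id]
  have hRG : R * G = P := by
    rw [hRdef, hGdef, hPdef, specF_mul]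
    refine specF_congr hCH (fun i => ?_)
    by_cases hi : hCH.eigenvalues i = 0
    · simp [hsq, hgi, hppd, hi]
    · simp only [hsq, hgi, hppd, if_neg hi]
      exact mul_inv_cancel₀ (hsqrtne i hi)
  have hGR : G * R = P := by
    rw [hRdef, hGdef, hPdef, specF_mul]
    refine specF_congr hCH (fun i => ?_)
    by_cases hi : hCH.eigenvalues i = 0
    · simp [hsq, hgi, hppd, hi]
    · simp only [hsq, hgi, hppd, if_neg hi]
      exact inv_mul_cancel₀ (hsqrtne i hi)
  have hGG : G * G = D := by
    rw [hGdef, hDdef, specF_mul]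
    refine specF_congr hCH (fun i => ?_)
    by_cases hi : hCH.eigenvalues i = 0
    · simp [hgi, hdi, hi]
    · simp only [hgi, hdi, if_neg hi]
      rw [← mul_inv, Real.mul_self_sqrt (hc0 i)]
  have hDCD : D * (C * D) = D := by
    conv_lhs => rw [← specF_id hCH]
    rw [hDdef, specF_mul, specF_mul]
    refine specF_congr hCH (fun i => ?_)
    by_cases hi : hCH.eigenvalues i = 0
    · simp [hdi, hi]
    · simp only [hdi, id, if_neg hi]
      field_simp
  have hPadd : P + P' = 1 := by
    rw [hPdef, hP'def, specF_add]
    rw [specF_congr hCH (h' := fun _ => 1) (fun i => by by_cases hi : hCH.eigenvalues i = 0 <;>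
      simp [hppd, hpc, hi]), specF_one]
  have hCP' : C * P' = 0 := by
    conv_lhs => rw [← specF_id hCH]
    rw [hP'def, specF_mul]
    rw [specF_congr hCH (h' := fun _ => 0) (fun i => by by_cases hi : hCH.eigenvalues i = 0 <;>
      simp [hpc, hi]), specF_zero]
  -- kernel of C is contained in kernel of B
  have hker : ∀ v : m → ℂ, C *ᵥ v = 0 → B *ᵥ v = 0 := by
    intro v hv
    set w := B *ᵥ v with hw
    have hα : 0 ≤ star w ⬝ᵥ (A *ᵥ w) := hA.dotProduct_mulVec_nonneg w
    have hs : 0 ≤ star w ⬝ᵥ w := by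
      simp only [dotProduct, Pi.star_apply]
      exact Finset.sum_nonneg fun i _ => star_mul_self_nonneg _
    set α := star w ⬝ᵥ (A *ᵥ w) with hαdef
    set s := star w ⬝ᵥ w with hsdef
    have hswap : star v ⬝ᵥ (B *ᵥ w) = s := by
      have h1 := dot_shift B v w
      rw [hB.eq] at h1
      rw [← h1, ← hw, hsdef]
    have key : ∀ t : ℝ, 0 ≤ (t:ℂ) * (t:ℂ) * α + 2 * (t:ℂ) * s := by
      intro t
      have h0 := hF.dotProduct_mulVec_nonneg (Sum.elim ((t:ℂ) • w) v)
      rw [fromBlocks_mulVec] at h0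
      simp only [Sum.elim_comp_inl, Sum.elim_comp_inr] at h0
      have hstar : star (Sum.elim ((t:ℂ) • w) v) =
          Sum.elim ((t:ℂ) • star w) (star v) := by
        funext i
        cases i <;> simp [Pi.star_apply, Complex.conj_ofReal]
      rw [hstar, sumElim_dotProduct_sumElim, hv, mulVec_smul, mulVec_smul,
        dotProduct_add, dotProduct_add, smul_dotProduct, smul_dotProduct,
        dotProduct_smul, dotProduct_smul, ← hw, hswap, dotProduct_zero, add_zero] at h0
      refine le_of_le_of_eq h0 ?_
      simp only [hαdef, hsdef, smul_eq_mul]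
      ring
    have hα' := Complex.nonneg_iff.mp hα
    have hs' := Complex.nonneg_iff.mp hs
    set a := α.re with hadef
    set b := s.re with hbdef
    have hαr : α = (a:ℂ) := Complex.ext rfl (by simp [← hα'.2])
    have hsr : s = (b:ℂ) := Complex.ext rfl (by simp [← hs'.2])
    have key' : ∀ t : ℝ, 0 ≤ t * t * a + 2 * t * b := by
      intro t
      have h1 := key t
      rw [hαr, hsr, show (t:ℂ) * (t:ℂ) * (a:ℂ) + 2 * (t:ℂ) * (b:ℂ)
        = ((t * t * a + 2 * t * b : ℝ) : ℂ) by push_cast; ring] at h1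
      exact Complex.zero_le_real.mp h1
    have hb : b = 0 := by
      by_contra hbne
      have hbpos : 0 < b := lt_of_le_of_ne hs'.1 (Ne.symm hbne)
      have hapos : (0:ℝ) < a + 1 := by linarith [hα'.1]
      set u := b / (a + 1) with hu
      have hbu : b = u * (a + 1) := by rw [hu, div_mul_cancel₀ _ hapos.ne']
      have h1 := key' (-u)
      have hupos : 0 < u := div_pos hbpos hapos
      nlinarith [h1, hbu, hupos, hα'.1, mul_pos hupos hupos]
    have hs0 : s = 0 := by rw [hsr, hb]; simp
    exact dotProduct_star_self_eq_zero.mp hs0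
  have hBP' : B * P' = 0 := by
    ext f j
    have hcol : C *ᵥ (fun k => P' k j) = 0 := by
      funext i
      have h1 : (C * P') i j = 0 := by rw [hCP']; rfl
      simpa [mul_apply, mulVec, dotProduct] using h1
    have h2 := hker _ hcol
    have h3 : (B * P') f j = (B *ᵥ (fun k => P' k j)) f := by
      simp [mul_apply, mulVec, dotProduct]
    rw [h3, h2]
    rfl
  have hBP : B * P = B := by
    have h1 : B * (P + P') = B * 1 := by rw [hPadd]
    rwa [mul_add, hBP', add_zero, mul_one] at h1
  have hPB : P * B = B := by
    have h1 := congrArg Matrix.conjTranspose hBP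
    rwa [conjTranspose_mul, hB.eq, (specF_herm hCH pp).eq] at h1
  set T := G * B * G with hTdef
  have hT : T.IsHermitian := by
    rw [Matrix.IsHermitian, hTdef, conjTranspose_mul, conjTranspose_mul,
      (specF_herm hCH gi).eq, hB.eq, Matrix.mul_assoc]
  set lam := hT.eigenvalues with hlamdef
  set V := (hT.eigenvectorUnitary : Matrix m m ℂ) with hVdef
  -- conjugation of a rank-one projector by R
  have hcr : ∀ u : m → ℂ, R * vecMulVec u (star u) * R = vecMulVec (R *ᵥ u) (star (R *ᵥ u)) := by
    intro u
    have hsu : star u ᵥ* R = star (R *ᵥ u) := by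
      rw [star_mulVec, hRherm.eq]
    rw [vecMulVec_eq (Fin 1), vecMulVec_eq (Fin 1), ← hsu, replicateRow_vecMul, ← Matrix.mul_assoc]
    rw [← replicateCol_mulVec, Matrix.mul_assoc]
  set E : m → Matrix m m ℂ := fun i =>
    vecMulVec (R *ᵥ fun j => V j i) (star (R *ᵥ fun j => V j i)) with hEdef
  have hEsum : ∀ h : ℝ → ℝ, (∑ i, (h (lam i) : ℂ) • E i) = R * specF hT h * R := by
    intro h
    rw [specF_sum hT h, Matrix.mul_sum, Matrix.sum_mul]
    refine Finset.sum_congr rfl fun i _ => ?_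
    rw [mul_smul_comm, smul_mul_assoc, hcr]
  have hsum1 : (∑ i, ((1:ℝ) : ℂ) • E i) = C := by
    rw [hEsum (fun _ => 1), specF_one, Matrix.mul_one, hRR]
  have hsumid : (∑ i, (lam i : ℂ) • E i) = B := by
    have h1 : (∑ i, (lam i : ℂ) • E i) = R * specF hT id * R := hEsum id
    rw [h1, specF_id]
    calc R * T * R = (R * G) * (B * (G * R)) := by
          rw [hTdef]; simp only [Matrix.mul_assoc]
      _ = P * (B * P) := by rw [hRG, hGR]
      _ = B := by rw [hBP, hPB]
  have hTT : specF hT (fun t => t * t) = T * T := by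
    have h1 : specF hT id * specF hT id = specF hT (fun t => id t * id t) :=
      specF_mul hT id id
    have h2 : specF hT id = T := specF_id hT
    exact (h1.symm.trans (congrArg₂ (· * ·) h2 h2) :)
  have hsumsq : (∑ i, ((lam i * lam i : ℝ) : ℂ) • E i) = B * (D * B) := by
    rw [hEsum (fun t => t * t), hTT]
    calc R * (T * T) * R = (R * G) * (B * ((G * G) * (B * (G * R)))) := by
          rw [hTdef]; simp only [Matrix.mul_assoc]
      _ = P * (B * (D * (B * P))) := by rw [hRG, hGG, hGR]
      _ = P * (B * (D * B)) := by rw [hBP]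
      _ = (P * B) * (D * B) := by rw [Matrix.mul_assoc]
      _ = B * (D * B) := by rw [hPB]
  -- the remainder term is PSD
  set Q0 := A - B * (D * B) with hQ0def
  have hQ0 : Q0.PosSemidef := by
    refine PosSemidef.of_dotProduct_mulVec_nonneg ?_ ?_
    · rw [Matrix.IsHermitian, hQ0def, conjTranspose_sub, conjTranspose_mul,
        conjTranspose_mul, hA.1.eq, hB.eq, (specF_herm hCH di).eq, ← hDdef]
      simp only [Matrix.mul_assoc]
    · intro v
      have h0 := hF.dotProduct_mulVec_nonneg (Sum.elim v (-((D * B) *ᵥ v)))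
      rw [fromBlocks_mulVec] at h0
      simp only [Sum.elim_comp_inl, Sum.elim_comp_inr] at h0
      have hstar : star (Sum.elim v (-((D * B) *ᵥ v))) =
          Sum.elim (star v) (-(star ((D * B) *ᵥ v))) := by
        funext i
        cases i <;> simp [Pi.star_apply]
      rw [hstar, sumElim_dotProduct_sumElim] at h0
      have hsh : ∀ x : m → ℂ, star ((D * B) *ᵥ v) ⬝ᵥ x = star v ⬝ᵥ ((B * D) *ᵥ x) := by
        intro x
        rw [dot_shift, conjTranspose_mul, hB.eq, (specF_herm hCH di).eq]
      rw [mulVec_neg, mulVec_neg, dotProduct_add, dotProduct_add, dotProduct_neg,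
        dotProduct_neg, neg_dotProduct, neg_dotProduct, neg_neg, hsh, hsh] at h0
      have e1 : star v ⬝ᵥ (B *ᵥ (D * B) *ᵥ v) = star v ⬝ᵥ ((B * (D * B)) *ᵥ v) := by
        rw [mulVec_mulVec]
      have e2 : star v ⬝ᵥ ((B * D) *ᵥ B *ᵥ v) = star v ⬝ᵥ ((B * (D * B)) *ᵥ v) := by
        rw [mulVec_mulVec, Matrix.mul_assoc]
      have e3 : star v ⬝ᵥ ((B * D) *ᵥ C *ᵥ (D * B) *ᵥ v) =
          star v ⬝ᵥ ((B * (D * B)) *ᵥ v) := by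
        have hmm : B * D * C * (D * B) = B * (D * B) := by
          calc B * D * C * (D * B) = B * (D * (C * D)) * B := by simp only [Matrix.mul_assoc]
          _ = B * (D * B) := by
              rw [show D * (C * D) = D from ?_]
              · simp only [Matrix.mul_assoc]
              · exact hDCD
        rw [mulVec_mulVec, mulVec_mulVec, hmm]
      rw [e1, e2, e3] at h0
      have goal_eq : star v ⬝ᵥ (Q0 *ᵥ v) =
          star v ⬝ᵥ (A *ᵥ v) - star v ⬝ᵥ ((B * (D * B)) *ᵥ v) := by
        rw [hQ0def, sub_mulVec, dotProduct_sub]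
      rw [goal_eq]
      refine le_of_le_of_eq h0 ?_
      ring
  -- helper to convert matrix identities to entrywise identities
  have happly : ∀ (c : m → ℝ) (Mx : Matrix m m ℂ), (∑ i, (c i : ℂ) • E i) = Mx →
      ∀ f g, (∑ i, (c i : ℂ) * E i f g) = Mx f g := by
    intro c Mx hM f g
    rw [← hM]
    simp [Matrix.sum_apply]
  -- assemble the decomposition
  set e := Fintype.equivFin m with hedef
  have hsum_split : ∀ (F : m → ℂ) (c : ℂ),
      (∑ k : Fin (Fintype.card m + 1),
        if h : (k:ℕ) < Fintype.card m then F (e.symm ⟨k, h⟩) else c)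
        = (∑ i : m, F i) + c := by
    intro F c
    rw [Fin.sum_univ_castSucc]
    congr 1
    · rw [← Equiv.sum_comp e.symm F]
      refine Finset.sum_congr rfl fun i _ => ?_
      rw [dif_pos (by simpa using i.2)]
      congr 1
    · rw [dif_neg (by simp)]
  refine ⟨Fintype.card m + 1,
    (fun k => if h : (k : ℕ) < Fintype.card m then
        vecMulVec ![((lam (e.symm ⟨k, h⟩) : ℝ) : ℂ), 1]
          (star ![((lam (e.symm ⟨k, h⟩) : ℝ) : ℂ), 1])
      else vecMulVec ![1, 0] (star ![1, 0])),
    (fun k => if h : (k : ℕ) < Fintype.card m then E (e.symm ⟨k, h⟩) else Q0),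
    fun k => ?_, fun k => ?_, ?_, ?_, ?_, ?_⟩
  · dsimp only
    split <;> exact psd_vecMulVec _
  · dsimp only
    split
    · exact psd_vecMulVec _
    · exact hQ0
  -- block (0,0)
  · intro f g
    have step1 : (∑ k : Fin (Fintype.card m + 1),
        (if h : (k : ℕ) < Fintype.card m then
            vecMulVec ![((lam (e.symm ⟨k, h⟩) : ℝ) : ℂ), 1]
              (star ![((lam (e.symm ⟨k, h⟩) : ℝ) : ℂ), 1])
          else vecMulVec ![1, 0] (star ![1, 0])) 0 0 *
        (if h : (k : ℕ) < Fintype.card m then E (e.symm ⟨k, h⟩) else Q0) f g)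
        = (∑ i : m, (vecMulVec ![((lam i : ℝ) : ℂ), 1]
            (star ![((lam i : ℝ) : ℂ), 1])) 0 0 * E i f g) +
          (vecMulVec ![(1:ℂ), 0] (star ![(1:ℂ), 0])) 0 0 * Q0 f g := by
      rw [← hsum_split (fun i => (vecMulVec ![((lam i : ℝ) : ℂ), 1]
            (star ![((lam i : ℝ) : ℂ), 1])) 0 0 * E i f g)]
      refine Finset.sum_congr rfl fun k _ => ?_
      by_cases h : (k : ℕ) < Fintype.card m
      · rw [dif_pos h, dif_pos h, dif_pos h]
      · rw [dif_neg h, dif_neg h, dif_neg h]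
    rw [step1]
    have hterm : ∀ i : m, (vecMulVec ![((lam i : ℝ) : ℂ), 1]
        (star ![((lam i : ℝ) : ℂ), 1])) 0 0 * E i f g
        = ((lam i * lam i : ℝ) : ℂ) * E i f g := by
      intro i
      simp [vecMulVec_apply, Complex.conj_ofReal]
    rw [Finset.sum_congr rfl fun i _ => hterm i,
      happly (fun i => lam i * lam i) _ hsumsq f g]
    simp [vecMulVec_apply, hQ0def, Matrix.sub_apply]
  -- block (0,1)
  · intro f g
    have step1 : (∑ k : Fin (Fintype.card m + 1),
        (if h : (k : ℕ) < Fintype.card m then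
            vecMulVec ![((lam (e.symm ⟨k, h⟩) : ℝ) : ℂ), 1]
              (star ![((lam (e.symm ⟨k, h⟩) : ℝ) : ℂ), 1])
          else vecMulVec ![1, 0] (star ![1, 0])) 0 1 *
        (if h : (k : ℕ) < Fintype.card m then E (e.symm ⟨k, h⟩) else Q0) f g)
        = (∑ i : m, (vecMulVec ![((lam i : ℝ) : ℂ), 1]
            (star ![((lam i : ℝ) : ℂ), 1])) 0 1 * E i f g) +
          (vecMulVec ![(1:ℂ), 0] (star ![(1:ℂ), 0])) 0 1 * Q0 f g := by
      rw [← hsum_split (fun i => (vecMulVec ![((lam i : ℝ) : ℂ), 1]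
            (star ![((lam i : ℝ) : ℂ), 1])) 0 1 * E i f g)]
      refine Finset.sum_congr rfl fun k _ => ?_
      by_cases h : (k : ℕ) < Fintype.card m
      · rw [dif_pos h, dif_pos h, dif_pos h]
      · rw [dif_neg h, dif_neg h, dif_neg h]
    rw [step1]
    have hterm : ∀ i : m, (vecMulVec ![((lam i : ℝ) : ℂ), 1]
        (star ![((lam i : ℝ) : ℂ), 1])) 0 1 * E i f g
        = ((lam i : ℝ) : ℂ) * E i f g := by
      intro i
      simp [vecMulVec_apply]
    rw [Finset.sum_congr rfl fun i _ => hterm i, happly (fun i => lam i) _ hsumid f g]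
    simp [vecMulVec_apply]
  -- block (1,0)
  · intro f g
    have step1 : (∑ k : Fin (Fintype.card m + 1),
        (if h : (k : ℕ) < Fintype.card m then
            vecMulVec ![((lam (e.symm ⟨k, h⟩) : ℝ) : ℂ), 1]
              (star ![((lam (e.symm ⟨k, h⟩) : ℝ) : ℂ), 1])
          else vecMulVec ![1, 0] (star ![1, 0])) 1 0 *
        (if h : (k : ℕ) < Fintype.card m then E (e.symm ⟨k, h⟩) else Q0) f g)
        = (∑ i : m, (vecMulVec ![((lam i : ℝ) : ℂ), 1]
            (star ![((lam i : ℝ) : ℂ), 1])) 1 0 * E i f g) +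
          (vecMulVec ![(1:ℂ), 0] (star ![(1:ℂ), 0])) 1 0 * Q0 f g := by
      rw [← hsum_split (fun i => (vecMulVec ![((lam i : ℝ) : ℂ), 1]
            (star ![((lam i : ℝ) : ℂ), 1])) 1 0 * E i f g)]
      refine Finset.sum_congr rfl fun k _ => ?_
      by_cases h : (k : ℕ) < Fintype.card m
      · rw [dif_pos h, dif_pos h, dif_pos h]
      · rw [dif_neg h, dif_neg h, dif_neg h]
    rw [step1]
    have hterm : ∀ i : m, (vecMulVec ![((lam i : ℝ) : ℂ), 1]
        (star ![((lam i : ℝ) : ℂ), 1])) 1 0 * E i f g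
        = ((lam i : ℝ) : ℂ) * E i f g := by
      intro i
      simp [vecMulVec_apply, Complex.conj_ofReal]
    rw [Finset.sum_congr rfl fun i _ => hterm i, happly (fun i => lam i) _ hsumid f g]
    simp [vecMulVec_apply]
  -- block (1,1)
  · intro f g
    have step1 : (∑ k : Fin (Fintype.card m + 1),
        (if h : (k : ℕ) < Fintype.card m then
            vecMulVec ![((lam (e.symm ⟨k, h⟩) : ℝ) : ℂ), 1]
              (star ![((lam (e.symm ⟨k, h⟩) : ℝ) : ℂ), 1])
          else vecMulVec ![1, 0] (star ![1, 0])) 1 1 *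
        (if h : (k : ℕ) < Fintype.card m then E (e.symm ⟨k, h⟩) else Q0) f g)
        = (∑ i : m, (vecMulVec ![((lam i : ℝ) : ℂ), 1]
            (star ![((lam i : ℝ) : ℂ), 1])) 1 1 * E i f g) +
          (vecMulVec ![(1:ℂ), 0] (star ![(1:ℂ), 0])) 1 1 * Q0 f g := by
      rw [← hsum_split (fun i => (vecMulVec ![((lam i : ℝ) : ℂ), 1]
            (star ![((lam i : ℝ) : ℂ), 1])) 1 1 * E i f g)]
      refine Finset.sum_congr rfl fun k _ => ?_
      by_cases h : (k : ℕ) < Fintype.card m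
      · rw [dif_pos h, dif_pos h, dif_pos h]
      · rw [dif_neg h, dif_neg h, dif_neg h]
    rw [step1]
    have hterm : ∀ i : m, (vecMulVec ![((lam i : ℝ) : ℂ), 1]
        (star ![((lam i : ℝ) : ℂ), 1])) 1 1 * E i f g
        = ((1 : ℝ) : ℂ) * E i f g := by
      intro i
      simp [vecMulVec_apply]
    rw [Finset.sum_congr rfl fun i _ => hterm i, happly (fun _ => 1) _ hsum1 f g]
    simp [vecMulVec_apply]

end Core


section Emb

/-- Extend a function on `Xᶜ` by the constant `a` on `X`. -/
def embX {N : ℕ} (X : Finset (Fin N)) (a : Fin 2) (f : {i // i ∈ Xᶜ} → Fin 2) :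
    Fin N → Fin 2 :=
  fun j => if h : j ∈ Xᶜ then f ⟨j, h⟩ else a

variable {N : ℕ} {X : Finset (Fin N)} {z : Fin N}

lemma embX_rec (hX : ∀ j, j ∈ X ↔ j = z) (x : Fin N → Fin 2) :
    embX X (x z) (fun i => x i.1) = x := by
  funext j
  unfold embX
  by_cases h : j ∈ Xᶜ
  · rw [dif_pos h]
  · rw [dif_neg h]
    have hm : j ∈ X := by simpa [Finset.mem_compl] using h
    rw [(hX j).mp hm]

lemma embX_mix (a b : Fin 2) (f g : {i // i ∈ Xᶜ} → Fin 2) :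
    (fun i => if i ∈ X then embX X b g i else embX X a f i) = embX X b f := by
  funext j
  by_cases h : j ∈ X
  · have hnc : j ∉ Xᶜ := by simp [h]
    rw [if_pos h]
    unfold embX
    rw [dif_neg hnc, dif_neg hnc]
  · have hc : j ∈ Xᶜ := Finset.mem_compl.mpr h
    rw [if_neg h]
    unfold embX
    rw [dif_pos hc, dif_pos hc]

end Emb

end Stmt14Aux

open Stmt14Aux Matrix

/-- A PSD operator invariant under partial transposition of qubit `0` is biseparable
across the `1:(N-1)` bipartition at qubit `0`. -/
theorem stmt14 (N : ℕ) (hN : 2 ≤ N)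
    (σ : Matrix (Fin N → Fin 2) (Fin N → Fin 2) ℂ) (hσ : σ.PosSemidef)
    (hpt : pt {⟨0, by omega⟩} σ = σ) :
    SepAcross {⟨0, by omega⟩} σ := by
  classical
  set z : Fin N := ⟨0, by omega⟩ with hz
  set X : Finset (Fin N) := {z} with hXdef
  have hX : ∀ j, j ∈ X ↔ j = z := fun j => Finset.mem_singleton
  show SepAcross X σ
  have hpt' : pt X σ = σ := hpt
  set Ab : Matrix ({i // i ∈ Xᶜ} → Fin 2) ({i // i ∈ Xᶜ} → Fin 2) ℂ :=
    fun f g => σ (embX X 0 f) (embX X 0 g) with hAbdef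
  set Bb : Matrix ({i // i ∈ Xᶜ} → Fin 2) ({i // i ∈ Xᶜ} → Fin 2) ℂ :=
    fun f g => σ (embX X 0 f) (embX X 1 g) with hBbdef
  set Cb : Matrix ({i // i ∈ Xᶜ} → Fin 2) ({i // i ∈ Xᶜ} → Fin 2) ℂ :=
    fun f g => σ (embX X 1 f) (embX X 1 g) with hCbdef
  have hptrel : ∀ f g, σ (embX X 1 f) (embX X 0 g) = σ (embX X 0 f) (embX X 1 g) := by
    intro f g
    have h1 : σ (fun i => if i ∈ X then (embX X 0 g) i else (embX X 1 f) i)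
        (fun i => if i ∈ X then (embX X 1 f) i else (embX X 0 g) i)
        = σ (embX X 1 f) (embX X 0 g) :=
      congrFun (congrFun hpt' (embX X 1 f)) (embX X 0 g)
    rw [embX_mix, embX_mix] at h1
    exact h1.symm
  have hBbH : Bb.IsHermitian := by
    show Bbᴴ = Bb
    ext f g
    rw [conjTranspose_apply]
    have h1 : star (σ (embX X 0 g) (embX X 1 f)) = σ (embX X 1 f) (embX X 0 g) :=
      hσ.1.apply _ _
    exact h1.trans (hptrel f g)
  have hFB : (fromBlocks Ab Bb Bb Cb).PosSemidef := by
    have hsub := hσ.submatrix (Sum.elim (embX X 0) (embX X 1))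
    have heq : σ.submatrix (Sum.elim (embX X 0) (embX X 1)) (Sum.elim (embX X 0) (embX X 1))
        = fromBlocks Ab Bb Bb Cb := by
      ext i j
      cases i <;> cases j
      · rfl
      · rfl
      · exact hptrel _ _
      · rfl
    rwa [heq] at hsub
  obtain ⟨K, Q, E, hQ, hE, h00, h01, h10, h11⟩ := core Ab Bb Cb hFB hBbH
  have hzX : z ∈ X := (hX z).mpr rfl
  refine ⟨K, fun k => Matrix.of (fun f g => Q k (f ⟨z, hzX⟩) (g ⟨z, hzX⟩)), E,
    fun k => (hQ k).submatrix _, hE, ?_⟩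
  intro x y
  have main : ∀ (a b : Fin 2) f g, σ (embX X a f) (embX X b g) = ∑ k, Q k a b * E k f g := by
    intro a b f g
    fin_cases a <;> fin_cases b
    · exact h00 f g
    · exact h01 f g
    · exact (hptrel f g).trans (h10 f g)
    · exact h11 f g
  calc σ x y = σ (embX X (x z) (fun i => x i.1)) (embX X (y z) (fun i => y i.1)) := by
        rw [embX_rec hX, embX_rec hX]
    _ = ∑ k, Q k (x z) (y z) * E k (fun i => x i.1) (fun i => y i.1) := main _ _ _ _
end
end

section
/- Let N ≥ 1, d ≥ 2, let ρ be a positive semidefinite complex matrix indexed by (Fin N → Fin d) with Tr(ρ) = 1, and let A_1, …, A_m be Hermitian matrices of the same size with Tr(A_j) = 0 for every j. Let P ∈ ℝ^m be the vector with P_j = Re Tr(ρ·A_j), and let L ⊆ ℝ^m be the convex hull of a finite set W with 0 ∈ L. If there is a real α* > 1 with α*·P ∈ L, then for every real β with β ≥ d^N/(α* − 1), the vector Q ∈ ℝ^m with Q_j = Re Tr(σ·A_j), where σ = ((d^N + β)·ρ − 𝟙)/β, satisfies Q ∈ L. -/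
open scoped ComplexOrder

noncomputable section

/-- Sufficient criterion for compatibility with a local-hidden-variable model:
if `α* P` lies in the local polytope `L = conv W` for some `α* > 1`, then the
correlations of `σ = ((d^N + β)ρ - 𝟙)/β` lie in `L` for all `β ≥ d^N/(α* - 1)`. -/
theorem stmt19 (N d m : ℕ) (hN : 1 ≤ N) (hd : 2 ≤ d)
    (ρ : Matrix (Fin N → Fin d) (Fin N → Fin d) ℂ) (hρ : ρ.PosSemidef)
    (htr : ρ.trace = 1)
    (A : Fin m → Matrix (Fin N → Fin d) (Fin N → Fin d) ℂ)
    (hA : ∀ j, (A j).IsHermitian) (hA0 : ∀ j, (A j).trace = 0)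
    (W : Finset (Fin m → ℝ))
    (h0 : (0 : Fin m → ℝ) ∈ convexHull ℝ (W : Set (Fin m → ℝ)))
    (αs : ℝ) (hαs : 1 < αs)
    (hP : (fun j => αs * ((ρ * A j).trace).re) ∈ convexHull ℝ (W : Set (Fin m → ℝ)))
    (β : ℝ) (hβ : (d : ℝ) ^ N / (αs - 1) ≤ β) :
    (fun j =>
        ((((β : ℂ)⁻¹ • ((((d : ℝ) ^ N + β : ℝ) : ℂ) • ρ -
            (1 : Matrix (Fin N → Fin d) (Fin N → Fin d) ℂ))) * A j).trace).re)
      ∈ convexHull ℝ (W : Set (Fin m → ℝ)) := by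
  have hdN : (0 : ℝ) < (d : ℝ) ^ N := by positivity
  have hβ0 : (0 : ℝ) < β :=
    lt_of_lt_of_le (div_pos hdN (by linarith)) hβ
  set c : ℝ := ((d : ℝ) ^ N + β) / β with hc
  have hc0 : 0 < c := div_pos (by linarith) hβ0
  have hcαs : c ≤ αs := by
    rw [hc, div_le_iff₀ hβ0]
    have : (d : ℝ) ^ N ≤ (αs - 1) * β := by
      rw [← div_le_iff₀' (by linarith)]
      exact hβ
    nlinarith
  have hkey : (fun j =>
        ((((β : ℂ)⁻¹ • ((((d : ℝ) ^ N + β : ℝ) : ℂ) • ρ -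
            (1 : Matrix (Fin N → Fin d) (Fin N → Fin d) ℂ))) * A j).trace).re)
      = (1 - c / αs) • (0 : Fin m → ℝ) +
        (c / αs) • (fun j => αs * ((ρ * A j).trace).re) := by
    funext j
    have h1 : (((β : ℂ)⁻¹ • ((((d : ℝ) ^ N + β : ℝ) : ℂ) • ρ -
            (1 : Matrix (Fin N → Fin d) (Fin N → Fin d) ℂ))) * A j).trace
        = (β : ℂ)⁻¹ * (((((d : ℝ) ^ N + β : ℝ) : ℂ)) * (ρ * A j).trace) := by
      rw [Matrix.smul_mul, Matrix.trace_smul, Matrix.sub_mul, Matrix.trace_sub,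
        Matrix.one_mul, hA0, Matrix.smul_mul, Matrix.trace_smul]
      simp [smul_eq_mul]
    have hαs0 : αs ≠ 0 := by linarith
    have hβne : β ≠ 0 := ne_of_gt hβ0
    simp only [Pi.add_apply, Pi.smul_apply, Pi.zero_apply, smul_eq_mul, mul_zero, zero_add,
      h1]
    rw [← Complex.ofReal_inv, ← mul_assoc, ← Complex.ofReal_mul, Complex.re_ofReal_mul]
    field_simp [hc]
    rw [hc, mul_div_assoc', eq_div_iff hβne]
    ring
  rw [hkey]
  exact (convex_convexHull ℝ (W : Set (Fin m → ℝ))) h0 hP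
    (by
      have : c / αs ≤ 1 := (div_le_one (by linarith)).2 hcαs
      linarith)
    (le_of_lt (div_pos hc0 (by linarith)))
    (by ring)
end
end
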